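/- arXiv:2511.10608 — 11 statements merged into one kernel-verified Lean document; each statement's English description precedes it below -/
import Mathlib

section
/- Let 𝒜 be a union-closed family with universe [n] and length ℓ (one less than the maximum size of a chain in 𝒜). Then |𝒜| ≤ ∑_{i=0}^{ℓ} C(n, i). -/
open Finset

private def famU {n : ℕ} (𝒜 : Finset (Finset (Fin n))) (T : Finset (Fin n)) : Finset (Fin n) :=
  (𝒜.filter fun X => Disjoint X T).sup id

private lemma famU_disjoint {n : ℕ} (𝒜 : Finset (Finset (Fin n))) (T : Finset (Fin n)) :
    Disjoint (famU 𝒜 T) T := by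
  rw [Finset.disjoint_left]
  intro x hx hxT
  rw [famU, Finset.mem_sup] at hx
  obtain ⟨X, hX, hxX⟩ := hx
  rw [Finset.mem_filter] at hX
  exact (Finset.disjoint_left.1 hX.2) hxX hxT

private lemma famU_subset_iff {n : ℕ} {𝒜 : Finset (Finset (Fin n))} {T X : Finset (Fin n)}
    (hX : X ∈ 𝒜) : Disjoint X T ↔ X ⊆ famU 𝒜 T := by
  constructor
  · intro h
    have hmem : X ∈ 𝒜.filter (fun X => Disjoint X T) :=
      (Finset.mem_filter (p := fun X => Disjoint X T)).2 ⟨hX, h⟩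
    have := Finset.le_sup (f := id) hmem
    rwa [famU]
  · intro h
    exact (famU_disjoint 𝒜 T).mono_left h

private lemma famU_antitone {n : ℕ} (𝒜 : Finset (Finset (Fin n))) {S T : Finset (Fin n)}
    (h : S ⊆ T) : famU 𝒜 T ⊆ famU 𝒜 S := by
  rw [famU, famU]
  have hsub : (𝒜.filter fun X => Disjoint X T) ⊆ (𝒜.filter fun X => Disjoint X S) :=
    Finset.monotone_filter_right 𝒜 (fun X _ hd => hd.mono_right h)
  exact Finset.le_iff_subset.1 (Finset.sup_mono (f := id) hsub)

private lemma famU_mem {n : ℕ} {𝒜 : Finset (Finset (Fin n))}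
    (huc : ∀ X ∈ 𝒜, ∀ Y ∈ 𝒜, X ∪ Y ∈ 𝒜) {T : Finset (Fin n)}
    (hne : ∃ X ∈ 𝒜, Disjoint X T) : famU 𝒜 T ∈ 𝒜 := by
  obtain ⟨X, hX, hXT⟩ := hne
  have hne' : (𝒜.filter fun X => Disjoint X T).Nonempty := ⟨X, Finset.mem_filter.2 ⟨hX, hXT⟩⟩
  have := Finset.sup'_mem (↑𝒜 : Set (Finset (Fin n)))
    (fun a ha b hb => by simpa [Finset.sup_eq_union] using huc a ha b hb)
    _ hne' id (fun i hi => (Finset.mem_filter.1 hi).1)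
  rwa [Finset.sup'_eq_sup] at this

private lemma famU_insert_congr {n : ℕ} {𝒜 : Finset (Finset (Fin n))} {R R' : Finset (Fin n)}
    (t : Fin n) (h : famU 𝒜 R' = famU 𝒜 R) :
    famU 𝒜 (insert t R') = famU 𝒜 (insert t R) := by
  unfold famU
  congr 1
  apply Finset.filter_congr
  intro X hX
  simp only [Finset.disjoint_insert_right]
  rw [famU_subset_iff hX, famU_subset_iff hX, h]

private lemma famU_chain {n : ℕ} (𝒜 : Finset (Finset (Fin n)))
    (huc : ∀ X ∈ 𝒜, ∀ Y ∈ 𝒜, X ∪ Y ∈ 𝒜) :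
    ∀ T : Finset (Fin n), (∃ X ∈ 𝒜, Disjoint X T) →
      (∀ T', famU 𝒜 T' = famU 𝒜 T → T.card ≤ T'.card) →
      ∃ 𝒞 ⊆ 𝒜, IsChain (· ⊆ ·) (𝒞 : Set (Finset (Fin n))) ∧ 𝒞.card = T.card + 1 ∧
        ∀ C ∈ 𝒞, famU 𝒜 T ⊆ C := by
  intro T
  induction T using Finset.strongInduction with
  | _ T ih =>
    intro hne hmin
    rcases T.eq_empty_or_nonempty with rfl | ⟨t, ht⟩
    · refine ⟨{famU 𝒜 ∅}, by simpa using famU_mem huc hne, ?_, by simp, by simp⟩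
      simp [IsChain, Set.Pairwise]
    · set R := T.erase t with hRdef
      have hRT : R ⊂ T := Finset.erase_ssubset ht
      have hcardR : R.card + 1 = T.card := Finset.card_erase_add_one ht
      have hne_R : ∃ X ∈ 𝒜, Disjoint X R := by
        obtain ⟨X, hX, hXT⟩ := hne
        exact ⟨X, hX, hXT.mono_right (Finset.erase_subset _ _)⟩
      have hmin_R : ∀ R', famU 𝒜 R' = famU 𝒜 R → R.card ≤ R'.card := by
        intro R' hR'
        have h2 : famU 𝒜 (insert t R') = famU 𝒜 (insert t R) := famU_insert_congr t hR'
        rw [Finset.insert_erase ht] at h2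
        have h3 := hmin _ h2
        have h4 := Finset.card_insert_le t R'
        omega
      obtain ⟨𝒞', hsub, hch, hcard, hbound⟩ := ih R hRT hne_R hmin_R
      have hUT_mem : famU 𝒜 T ∈ 𝒜 := famU_mem huc hne
      have hTR : famU 𝒜 T ⊆ famU 𝒜 R := famU_antitone 𝒜 (Finset.erase_subset _ _)
      have hnotmem : famU 𝒜 T ∉ 𝒞' := by
        intro hmem
        have heq : famU 𝒜 R = famU 𝒜 T := Finset.Subset.antisymm (hbound _ hmem) hTR
        have := hmin R heq
        omega
      refine ⟨insert (famU 𝒜 T) 𝒞', Finset.insert_subset hUT_mem hsub, ?_, ?_, ?_⟩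
      · rw [Finset.coe_insert]
        exact hch.insert (fun b hb _ => Or.inl (hTR.trans (hbound _ hb)))
      · rw [Finset.card_insert_of_notMem hnotmem]
        omega
      · intro C hC
        rcases Finset.mem_insert.1 hC with rfl | hC'
        · exact subset_rfl
        · exact hTR.trans (hbound _ hC')

private lemma count_small {n ℓ : ℕ} :
    ((Finset.univ : Finset (Finset (Fin n))).filter fun S => S.card ≤ ℓ).card
      = ∑ i ∈ Finset.range (ℓ + 1), n.choose i := by
  have h1 : ((Finset.univ : Finset (Finset (Fin n))).filter fun S => S.card ≤ ℓ)
      = (Finset.range (ℓ + 1)).biUnion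
        (fun i => (Finset.univ : Finset (Finset (Fin n))).filter fun S => S.card = i) := by
    ext S
    simp [Nat.lt_succ_iff]
  rw [h1, Finset.card_biUnion]
  · apply Finset.sum_congr rfl
    intro i _
    have := Finset.card_powersetCard i (Finset.univ : Finset (Fin n))
    rw [Finset.powersetCard_eq_filter, Finset.powerset_univ, Finset.card_univ,
      Fintype.card_fin] at this
    rw [this]
  · intro i _ j _ hij
    simp only [Finset.disjoint_left, Finset.mem_filter]
    rintro S ⟨-, rfl⟩ ⟨-, h⟩
    exact hij h

/-- A union-closed family with universe [n] and length ℓ has at most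
∑_{i=0}^{ℓ} C(n,i) members. -/
theorem union_closed_card_le (n ℓ : ℕ) (𝒜 : Finset (Finset (Fin n)))
    (hne : ∃ A ∈ 𝒜, A.Nonempty)
    (huc : ∀ X ∈ 𝒜, ∀ Y ∈ 𝒜, X ∪ Y ∈ 𝒜)
    (huniv : 𝒜.sup id = Finset.univ)
    (hchain : ∃ 𝒞 ⊆ 𝒜, IsChain (· ⊆ ·) (𝒞 : Set (Finset (Fin n))) ∧ 𝒞.card = ℓ + 1)
    (hmax : ∀ 𝒞 ⊆ 𝒜, IsChain (· ⊆ ·) (𝒞 : Set (Finset (Fin n))) → 𝒞.card ≤ ℓ + 1) :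
    𝒜.card ≤ ∑ i ∈ Finset.range (ℓ + 1), n.choose i := by
  classical
  have hUcompl : ∀ A ∈ 𝒜, famU 𝒜 Aᶜ = A := by
    intro A hA
    apply Finset.Subset.antisymm
    · rw [famU]
      refine Finset.le_iff_subset.1 (Finset.sup_le ?_)
      intro X hX
      rw [Finset.mem_filter] at hX
      intro x hx
      by_contra h
      exact Finset.disjoint_left.1 hX.2 hx (Finset.mem_compl.2 h)
    · have hmem : A ∈ 𝒜.filter (fun X => Disjoint X Aᶜ) :=
        (Finset.mem_filter (p := fun X => Disjoint X Aᶜ)).2 ⟨hA, disjoint_compl_right⟩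
      have := Finset.le_sup (f := id) hmem
      rwa [famU]
  have hg : ∀ A : Finset (Fin n), ∃ T : Finset (Fin n),
      A ∈ 𝒜 → (famU 𝒜 T = A ∧ T.card ≤ ℓ) := by
    intro A
    by_cases hA : A ∈ 𝒜
    · obtain ⟨T, hT, hTmin⟩ := Finset.exists_min_image
        ((Finset.univ : Finset (Finset (Fin n))).filter fun T => famU 𝒜 T = A)
        Finset.card ⟨Aᶜ, Finset.mem_filter.2 ⟨Finset.mem_univ _, hUcompl A hA⟩⟩
      rw [Finset.mem_filter] at hT
      have hTA := hT.2
      have hmin' : ∀ T', famU 𝒜 T' = famU 𝒜 T → T.card ≤ T'.card := by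
        intro T' h
        exact hTmin T' (Finset.mem_filter.2 ⟨Finset.mem_univ _, by rw [h, hTA]⟩)
      have hneT : ∃ X ∈ 𝒜, Disjoint X T :=
        ⟨A, hA, by rw [← hTA]; exact famU_disjoint 𝒜 T⟩
      obtain ⟨𝒞, hsub, hch, hcard, -⟩ := famU_chain 𝒜 huc T hneT hmin'
      have hle := hmax 𝒞 hsub hch
      exact ⟨T, fun _ => ⟨hTA, by omega⟩⟩
    · exact ⟨∅, fun h => absurd h hA⟩
  choose g hgspec using hg
  calc 𝒜.card
      ≤ ((Finset.univ : Finset (Finset (Fin n))).filter fun S => S.card ≤ ℓ).card := by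
        apply Finset.card_le_card_of_injOn g
        · intro A hA
          exact Finset.mem_filter.2 ⟨Finset.mem_univ _, (hgspec A hA).2⟩
        · intro A hA B hB h
          rw [← (hgspec A hA).1, ← (hgspec B hB).1, h]
    _ = ∑ i ∈ Finset.range (ℓ + 1), n.choose i := count_small
end

section
/- Let 𝒜 be a union-closed family with universe [n] and length ℓ. Then |𝒜| = ∑_{i=0}^{ℓ} C(n, i) if and only if 𝒜 equals the family of all subsets of [n] of size at least n − ℓ. -/
open Finset

variable {α : Type*} [DecidableEq α]

private def ucBound (m h : ℕ) : ℕ := ∑ i ∈ Finset.range h, m.choose i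

private lemma ucBound_zero (m : ℕ) : ucBound m 0 = 0 := rfl

private lemma ucBound_zero_succ (k : ℕ) : ucBound 0 (k + 1) = 1 := by
  induction k with
  | zero => simp [ucBound]
  | succ k ih => simp [ucBound, Finset.sum_range_succ] at ih ⊢; omega

private lemma ucBound_pascal (m k : ℕ) :
    ucBound (m + 1) (k + 1) = ucBound m (k + 1) + ucBound m k := by
  induction k with
  | zero => simp [ucBound]
  | succ k ih =>
    simp only [ucBound, Finset.sum_range_succ] at ih ⊢
    have := Nat.choose_succ_succ m k
    have := Nat.choose_succ_succ' m k  -- maybe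
    omega

private lemma exists_chain_between : ∀ (d : ℕ) (S V : Finset α), S ⊆ V → V.card - S.card = d →
    ∃ 𝒞 : Finset (Finset α), IsChain (· ⊆ ·) (𝒞 : Set (Finset α)) ∧
      (∀ T ∈ 𝒞, S ⊆ T ∧ T ⊆ V) ∧ 𝒞.card = d + 1 := by
  intro d
  induction d with
  | zero =>
    intro S V hSV hd
    have : S = V := Finset.eq_of_subset_of_card_le hSV (by omega)
    subst this
    exact ⟨{S}, by simp [Set.subsingleton_singleton.isChain], by simp, by simp⟩
  | succ k ih =>
    intro S V hSV hd
    have hlt : S.card < V.card := by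
      have := Finset.card_le_card hSV; omega
    have hne : (V \ S).Nonempty := by
      rw [Finset.sdiff_nonempty]
      intro h
      have := Finset.card_le_card h; omega
    obtain ⟨y, hy⟩ := hne
    rw [Finset.mem_sdiff] at hy
    have hins : insert y S ⊆ V := Finset.insert_subset hy.1 hSV
    have hcard : (insert y S).card = S.card + 1 := Finset.card_insert_of_notMem hy.2
    obtain ⟨𝒞, hch, hmem, hc⟩ := ih (insert y S) V hins (by omega)
    have hSnot : S ∉ 𝒞 := fun h => hy.2 ((hmem S h).1 (Finset.mem_insert_self y S))
    refine ⟨insert S 𝒞, ?_, ?_, ?_⟩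
    · rw [Finset.coe_insert]
      apply hch.insert
      intro T hT _
      exact Or.inl ((Finset.subset_insert y S).trans (hmem T hT).1)
    · intro T hT
      rcases Finset.mem_insert.mp hT with rfl | hT
      · exact ⟨subset_rfl, hSV⟩
      · exact ⟨(Finset.subset_insert y S).trans (hmem T hT).1, (hmem T hT).2⟩
    · rw [Finset.card_insert_of_notMem hSnot, hc]
private lemma card_filter_large (V : Finset α) (h : ℕ) :
    (V.powerset.filter (fun S => V.card + 1 ≤ S.card + h)).card = ucBound V.card h := by
  classical
  rw [Finset.powerset_card_biUnion, Finset.filter_biUnion]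
  rw [Finset.card_biUnion (fun i hi j hj hij =>
    Finset.disjoint_filter_filter (V.pairwise_disjoint_powersetCard hij))]
  have hterm : ∀ i ∈ Finset.range (V.card + 1),
      ((V.powersetCard i).filter (fun S => V.card + 1 ≤ S.card + h)).card
        = if V.card + 1 ≤ i + h then V.card.choose i else 0 := by
    intro i hi
    by_cases hc : V.card + 1 ≤ i + h
    · rw [if_pos hc, Finset.filter_true_of_mem, Finset.card_powersetCard]
      intro S hS
      rw [Finset.mem_powersetCard] at hS
      omega
    · rw [if_neg hc, Finset.card_eq_zero, Finset.filter_eq_empty_iff]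
      intro S hS
      rw [Finset.mem_powersetCard] at hS
      omega
  rw [Finset.sum_congr rfl hterm, ← Finset.sum_range_reflect]
  simp only [Nat.add_sub_cancel]
  have hstep : ∀ j ∈ Finset.range (V.card + 1),
      (if V.card + 1 ≤ (V.card - j) + h then V.card.choose (V.card - j) else 0)
        = if j < h then V.card.choose j else 0 := by
    intro j hj
    rw [Finset.mem_range] at hj
    have hj' : j ≤ V.card := by omega
    rw [Nat.choose_symm hj']
    congr 1
    simp only [eq_iff_iff]
    omega
  rw [Finset.sum_congr rfl hstep]
  unfold ucBound
  rw [← Finset.sum_filter]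
  have hfil : (Finset.range (V.card + 1)).filter (· < h) = Finset.range (min h (V.card + 1)) := by
    ext j
    simp [Finset.mem_filter, Finset.mem_range]
    omega
  rw [hfil]
  apply Finset.sum_subset
  · exact Finset.range_subset_range.mpr (min_le_left _ _)
  · intro j hj hj2
    simp only [Finset.mem_range] at hj hj2
    exact Nat.choose_eq_zero_of_lt (by omega)
private lemma sup_mem_of_uc {𝒜 : Finset (Finset α)} (hne : 𝒜.Nonempty)
    (huc : ∀ X ∈ 𝒜, ∀ Y ∈ 𝒜, X ∪ Y ∈ 𝒜) : 𝒜.sup id ∈ 𝒜 := by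
  rw [← Finset.sup'_eq_sup hne]
  exact Finset.sup'_mem (↑𝒜 : Set (Finset α)) huc 𝒜 hne id (fun A hA => hA)

private lemma uc_card_le : ∀ (m : ℕ) (U : Finset α) (h : ℕ) (𝒜 : Finset (Finset α)),
    U.card = m → (∀ A ∈ 𝒜, A ⊆ U) → (∀ X ∈ 𝒜, ∀ Y ∈ 𝒜, X ∪ Y ∈ 𝒜) →
    (∀ 𝒞 ⊆ 𝒜, IsChain (· ⊆ ·) (𝒞 : Set (Finset α)) → 𝒞.card ≤ h) →
    𝒜.card ≤ ucBound m h := by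
  intro m
  induction m with
  | zero =>
    intro U h 𝒜 hU hsub huc hch
    rw [Finset.card_eq_zero] at hU; subst hU
    have h1 : 𝒜 ⊆ {∅} := fun A hA => by
      simp [Finset.subset_empty.mp (hsub A hA)]
    rcases Finset.subset_singleton_iff.mp h1 with rfl | rfl
    · simp
    · have : 1 ≤ h := hch {∅} subset_rfl (by simp [Set.subsingleton_singleton.isChain])
      obtain ⟨k, rfl⟩ := Nat.exists_eq_add_of_le this
      rw [Nat.add_comm, ucBound_zero_succ]
      simp
  | succ m ih =>
    intro U h 𝒜 hU hsub huc hch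
    rcases Finset.eq_empty_or_nonempty 𝒜 with rfl | hne
    · simp
    have h1 : 1 ≤ h := by
      obtain ⟨A, hA⟩ := hne
      have := hch {A} (Finset.singleton_subset_iff.mpr hA)
        (by simp [Set.subsingleton_singleton.isChain])
      simpa using this
    obtain ⟨k, rfl⟩ := Nat.exists_eq_add_of_le h1
    rw [Nat.add_comm 1 k]
    set M := 𝒜.sup id with hM
    have hMmem : M ∈ 𝒜 := sup_mem_of_uc hne huc
    have hMtop : ∀ A ∈ 𝒜, A ⊆ M := fun A hA => Finset.le_sup (f := id) hA
    rcases Finset.eq_empty_or_nonempty M with hMe | hMne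
    · -- all sets empty
      have h1' : 𝒜 ⊆ {∅} := fun A hA => by
        have := hMtop A hA; rw [hMe] at this
        simp [Finset.subset_empty.mp this]
      calc 𝒜.card ≤ ({∅} : Finset (Finset α)).card := Finset.card_le_card h1'
        _ ≤ ucBound (m+1) (k+1) := by
          simp [ucBound, Finset.sum_range_succ']
    obtain ⟨x, hx⟩ := hMne
    have hxU : x ∈ U := hsub M hMmem hx
    set U' := U.erase x with hU'
    have hU'card : U'.card = m := by
      rw [hU', Finset.card_erase_of_mem hxU, hU]
      omega
    set 𝒜p := 𝒜.filter (fun A => x ∈ A) with h𝒜p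
    set 𝒜0 := 𝒜.filter (fun A => x ∉ A) with h𝒜0
    set 𝒜1 := 𝒜p.image (fun A => A.erase x) with h𝒜1
    have hsplit : 𝒜p.card + 𝒜0.card = 𝒜.card :=
      Finset.card_filter_add_card_filter_not _
    have hinj : Set.InjOn (fun A : Finset α => A.erase x) (↑𝒜p : Set (Finset α)) := by
      intro A hA B hB hAB
      simp only [h𝒜p, Finset.coe_filter, Set.mem_setOf_eq] at hA hB
      rw [← Finset.insert_erase hA.2, ← Finset.insert_erase hB.2]
      simp only at hAB
      rw [hAB]
    have h𝒜1card : 𝒜1.card = 𝒜p.card := Finset.card_image_of_injOn hinj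
    -- members of 𝒜1: erase form
    have hmem1 : ∀ B ∈ 𝒜1, insert x B ∈ 𝒜 ∧ x ∉ B ∧ B ⊆ U' := by
      intro B hB
      rw [h𝒜1, Finset.mem_image] at hB
      obtain ⟨A, hA, rfl⟩ := hB
      rw [h𝒜p, Finset.mem_filter] at hA
      refine ⟨by rw [Finset.insert_erase hA.2]; exact hA.1, Finset.notMem_erase _ _, ?_⟩
      exact Finset.erase_subset_erase x (hsub A hA.1)
    -- bound for 𝒜1
    have hb1 : 𝒜1.card ≤ ucBound m (k+1) := by
      apply ih U' (k+1) 𝒜1 hU'card (fun B hB => (hmem1 B hB).2.2)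
      · intro B hB C hC
        obtain ⟨hBm, hBx, _⟩ := hmem1 B hB
        obtain ⟨hCm, hCx, _⟩ := hmem1 C hC
        rw [h𝒜1, Finset.mem_image]
        refine ⟨insert x B ∪ insert x C, ?_, ?_⟩
        · rw [h𝒜p, Finset.mem_filter]
          exact ⟨huc _ hBm _ hCm, by simp⟩
        · rw [Finset.erase_union_distrib]
          rw [Finset.erase_insert hBx, Finset.erase_insert hCx]
      · intro 𝒞 h𝒞 hch𝒞
        have himg : 𝒞.image (fun B => insert x B) ⊆ 𝒜 := by
          intro T hT
          rw [Finset.mem_image] at hT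
          obtain ⟨B, hB, rfl⟩ := hT
          exact (hmem1 B (h𝒞 hB)).1
        have hinj2 : Set.InjOn (fun B : Finset α => insert x B) (↑𝒞 : Set (Finset α)) := by
          intro B hB C hC hBC
          have hBx := (hmem1 B (h𝒞 hB)).2.1
          have hCx := (hmem1 C (h𝒞 hC)).2.1
          rw [← Finset.erase_insert hBx, ← Finset.erase_insert hCx]
          simp only at hBC
          rw [hBC]
        have hchim : IsChain (· ⊆ ·) ((𝒞.image (fun B => insert x B) : Finset (Finset α)) : Set (Finset α)) := by
          rw [Finset.coe_image]
          intro T hT T' hT' hne'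
          obtain ⟨B, hB, rfl⟩ := hT
          obtain ⟨C, hC, rfl⟩ := hT'
          have hBC : B ≠ C := fun e => hne' (by rw [e])
          rcases hch𝒞 hB hC hBC with hle | hle
          · exact Or.inl (Finset.insert_subset_insert x hle)
          · exact Or.inr (Finset.insert_subset_insert x hle)
        have := hch _ himg hchim
        rw [Finset.card_image_of_injOn hinj2] at this
        omega
    -- bound for 𝒜0
    have hb0 : 𝒜0.card ≤ ucBound m k := by
      apply ih U' k 𝒜0 hU'card
      · intro A hA
        rw [h𝒜0, Finset.mem_filter] at hA
        exact fun a ha => Finset.mem_erase.mpr ⟨fun e => hA.2 (e ▸ ha), hsub A hA.1 ha⟩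
      · intro A hA B hB
        rw [h𝒜0, Finset.mem_filter] at hA hB ⊢
        exact ⟨huc A hA.1 B hB.1, by simp [hA.2, hB.2]⟩
      · intro 𝒞 h𝒞 hch𝒞
        have hMnot : M ∉ 𝒞 := by
          intro hMc
          have := h𝒞 hMc
          rw [h𝒜0, Finset.mem_filter] at this
          exact this.2 hx
        have hsub' : insert M 𝒞 ⊆ 𝒜 := by
          intro T hT
          rcases Finset.mem_insert.mp hT with rfl | hT
          · exact hMmem
          · exact (Finset.filter_subset _ _) (h𝒞 hT)
        have hchain' : IsChain (· ⊆ ·) ((insert M 𝒞 : Finset (Finset α)) : Set (Finset α)) := by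
          rw [Finset.coe_insert]
          apply hch𝒞.insert
          intro T hT _
          exact Or.inr (hMtop T ((Finset.filter_subset _ _) (h𝒞 hT)))
        have := hch _ hsub' hchain'
        rw [Finset.card_insert_of_notMem hMnot] at this
        omega
    rw [ucBound_pascal]
    omega
private lemma uc_card_eq : ∀ (m : ℕ) (U : Finset α) (h : ℕ) (𝒜 : Finset (Finset α)),
    U.card = m → (∀ X ∈ 𝒜, ∀ Y ∈ 𝒜, X ∪ Y ∈ 𝒜) →
    (∀ 𝒞 ⊆ 𝒜, IsChain (· ⊆ ·) (𝒞 : Set (Finset α)) → 𝒞.card ≤ h) →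
    𝒜.sup id = U → 𝒜.card = ucBound m h →
    𝒜 = U.powerset.filter (fun S => U.card + 1 ≤ S.card + h) := by
  intro m
  induction m with
  | zero =>
    intro U h 𝒜 hU huc hch hsup hcard
    rw [Finset.card_eq_zero] at hU; subst hU
    have hsub : ∀ A ∈ 𝒜, A ⊆ (∅ : Finset α) := by
      intro A hA; rw [← hsup]; exact Finset.le_sup (f := id) hA
    have h1 : 𝒜 ⊆ {∅} := fun A hA => by
      simp only [Finset.mem_singleton]
      exact Finset.subset_empty.mp (hsub A hA)
    rcases Finset.subset_singleton_iff.mp h1 with rfl | rfl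
    · -- empty family: h must be 0
      cases h with
      | zero =>
        ext S
        simp [Finset.mem_filter, Finset.mem_powerset, Finset.subset_empty]
      | succ k =>
        rw [Finset.card_empty, ucBound_zero_succ] at hcard
        omega
    · cases h with
      | zero =>
        rw [Finset.card_singleton, ucBound_zero] at hcard
        omega
      | succ k =>
        ext S
        simp only [Finset.mem_singleton, Finset.mem_filter, Finset.mem_powerset,
          Finset.subset_empty, Finset.card_empty]
        constructor
        · rintro rfl; simp
        · intro hS; simp at hS; exact hS.1
  | succ m ih =>
    intro U h 𝒜 hU huc hch hsup hcard
    have hsub : ∀ A ∈ 𝒜, A ⊆ U := by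
      intro A hA; rw [← hsup]; exact Finset.le_sup (f := id) hA
    have hne : 𝒜.Nonempty := by
      rcases Finset.eq_empty_or_nonempty 𝒜 with rfl | hne
      · exfalso
        rw [Finset.sup_empty] at hsup
        have : U.card = 0 := by rw [← hsup]; rfl
        omega
      · exact hne
    have hUmem : U ∈ 𝒜 := hsup ▸ sup_mem_of_uc hne huc
    have h1 : 1 ≤ h := by
      have := hch {U} (Finset.singleton_subset_iff.mpr hUmem)
        (by simp [Set.subsingleton_singleton.isChain])
      simpa using this
    obtain ⟨k, rfl⟩ := Nat.exists_eq_add_of_le h1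
    rw [Nat.add_comm 1 k] at hch hcard ⊢
    have hUne : U.Nonempty := Finset.card_pos.mp (by omega)
    obtain ⟨x, hxU⟩ := hUne
    set U' := U.erase x with hU'
    have hU'card : U'.card = m := by
      rw [hU', Finset.card_erase_of_mem hxU, hU]
      omega
    set 𝒜p := 𝒜.filter (fun A => x ∈ A) with h𝒜p
    set 𝒜0 := 𝒜.filter (fun A => x ∉ A) with h𝒜0
    set 𝒜1 := 𝒜p.image (fun A => A.erase x) with h𝒜1
    have hsplit : 𝒜p.card + 𝒜0.card = 𝒜.card :=
      Finset.card_filter_add_card_filter_not _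
    have hinj : Set.InjOn (fun A : Finset α => A.erase x) (↑𝒜p : Set (Finset α)) := by
      intro A hA B hB hAB
      simp only [h𝒜p, Finset.coe_filter, Set.mem_setOf_eq] at hA hB
      rw [← Finset.insert_erase hA.2, ← Finset.insert_erase hB.2]
      simp only at hAB
      rw [hAB]
    have h𝒜1card : 𝒜1.card = 𝒜p.card := Finset.card_image_of_injOn hinj
    have hmem1 : ∀ B ∈ 𝒜1, insert x B ∈ 𝒜 ∧ x ∉ B ∧ B ⊆ U' := by
      intro B hB
      rw [h𝒜1, Finset.mem_image] at hB
      obtain ⟨A, hA, rfl⟩ := hB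
      rw [h𝒜p, Finset.mem_filter] at hA
      refine ⟨by rw [Finset.insert_erase hA.2]; exact hA.1, Finset.notMem_erase _ _, ?_⟩
      exact Finset.erase_subset_erase x (hsub A hA.1)
    -- key: membership transfer for sets containing x
    have hmemp : ∀ S : Finset α, x ∈ S → (S ∈ 𝒜 ↔ S.erase x ∈ 𝒜1) := by
      intro S hxS
      constructor
      · intro hS
        rw [h𝒜1, Finset.mem_image]
        exact ⟨S, by rw [h𝒜p, Finset.mem_filter]; exact ⟨hS, hxS⟩, rfl⟩
      · intro hS
        rw [h𝒜1, Finset.mem_image] at hS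
        obtain ⟨A, hA, hAe⟩ := hS
        rw [h𝒜p, Finset.mem_filter] at hA
        have : A = S := by
          rw [← Finset.insert_erase hA.2, hAe, Finset.insert_erase hxS]
        exact this ▸ hA.1
    -- chain bound for 𝒜1
    have hch1 : ∀ 𝒞 ⊆ 𝒜1, IsChain (· ⊆ ·) (𝒞 : Set (Finset α)) → 𝒞.card ≤ k + 1 := by
      intro 𝒞 h𝒞 hch𝒞
      have himg : 𝒞.image (fun B => insert x B) ⊆ 𝒜 := by
        intro T hT
        rw [Finset.mem_image] at hT
        obtain ⟨B, hB, rfl⟩ := hT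
        exact (hmem1 B (h𝒞 hB)).1
      have hinj2 : Set.InjOn (fun B : Finset α => insert x B) (↑𝒞 : Set (Finset α)) := by
        intro B hB C hC hBC
        have hBx := (hmem1 B (h𝒞 hB)).2.1
        have hCx := (hmem1 C (h𝒞 hC)).2.1
        rw [← Finset.erase_insert hBx, ← Finset.erase_insert hCx]
        simp only at hBC
        rw [hBC]
      have hchim : IsChain (· ⊆ ·) ((𝒞.image (fun B => insert x B) : Finset (Finset α)) : Set (Finset α)) := by
        rw [Finset.coe_image]
        intro T hT T' hT' hne'
        obtain ⟨B, hB, rfl⟩ := hT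
        obtain ⟨C, hC, rfl⟩ := hT'
        have hBC : B ≠ C := fun e => hne' (by rw [e])
        rcases hch𝒞 hB hC hBC with hle | hle
        · exact Or.inl (Finset.insert_subset_insert x hle)
        · exact Or.inr (Finset.insert_subset_insert x hle)
      have := hch _ himg hchim
      rw [Finset.card_image_of_injOn hinj2] at this
      omega
    have huc1 : ∀ X ∈ 𝒜1, ∀ Y ∈ 𝒜1, X ∪ Y ∈ 𝒜1 := by
      intro B hB C hC
      obtain ⟨hBm, hBx, _⟩ := hmem1 B hB
      obtain ⟨hCm, hCx, _⟩ := hmem1 C hC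
      rw [h𝒜1, Finset.mem_image]
      refine ⟨insert x B ∪ insert x C, ?_, ?_⟩
      · rw [h𝒜p, Finset.mem_filter]
        exact ⟨huc _ hBm _ hCm, by simp⟩
      · rw [Finset.erase_union_distrib, Finset.erase_insert hBx, Finset.erase_insert hCx]
    -- bounds
    have hb1 : 𝒜1.card ≤ ucBound m (k+1) :=
      uc_card_le m U' (k+1) 𝒜1 hU'card (fun B hB => (hmem1 B hB).2.2) huc1 hch1
    have hb0 : 𝒜0.card ≤ ucBound m k := by
      apply uc_card_le m U' k 𝒜0 hU'card
      · intro A hA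
        rw [h𝒜0, Finset.mem_filter] at hA
        exact fun a ha => Finset.mem_erase.mpr ⟨fun e => hA.2 (e ▸ ha), hsub A hA.1 ha⟩
      · intro A hA B hB
        rw [h𝒜0, Finset.mem_filter] at hA hB ⊢
        exact ⟨huc A hA.1 B hB.1, by simp [hA.2, hB.2]⟩
      · intro 𝒞 h𝒞 hch𝒞
        have hMnot : U ∉ 𝒞 := by
          intro hMc
          have := h𝒞 hMc
          rw [h𝒜0, Finset.mem_filter] at this
          exact this.2 hxU
        have hsub' : insert U 𝒞 ⊆ 𝒜 := by
          intro T hT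
          rcases Finset.mem_insert.mp hT with rfl | hT
          · exact hUmem
          · exact (Finset.filter_subset _ _) (h𝒞 hT)
        have hchain' : IsChain (· ⊆ ·) ((insert U 𝒞 : Finset (Finset α)) : Set (Finset α)) := by
          rw [Finset.coe_insert]
          apply hch𝒞.insert
          intro T hT _
          exact Or.inr (hsub T ((Finset.filter_subset _ _) (h𝒞 hT)))
        have := hch _ hsub' hchain'
        rw [Finset.card_insert_of_notMem hMnot] at this
        omega
    -- equality split
    have hpas := ucBound_pascal m k
    have he1 : 𝒜1.card = ucBound m (k+1) := by omega
    have he0 : 𝒜0.card = ucBound m k := by omega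
    -- sup of 𝒜1 is U'
    have hsup1 : 𝒜1.sup id = U' := by
      apply le_antisymm
      · exact Finset.sup_le (fun B hB => (hmem1 B hB).2.2)
      · have : U.erase x ∈ 𝒜1 := by
          rw [h𝒜1, Finset.mem_image]
          exact ⟨U, by rw [h𝒜p, Finset.mem_filter]; exact ⟨hUmem, hxU⟩, rfl⟩
        exact Finset.le_sup (f := id) this
    have h𝒜1eq := ih U' (k+1) 𝒜1 hU'card huc1 hch1 hsup1 he1
    rw [hU'card] at h𝒜1eq
    -- 𝒜0 is the corresponding filter
    set F0 := U'.powerset.filter (fun S => m + 1 ≤ S.card + k) with hF0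
    have h𝒜0sub : 𝒜0 ⊆ F0 := by
      intro A hA
      rw [h𝒜0, Finset.mem_filter] at hA
      have hAU' : A ⊆ U' := fun a ha =>
        Finset.mem_erase.mpr ⟨fun e => hA.2 (e ▸ ha), hsub A hA.1 ha⟩
      rw [hF0, Finset.mem_filter, Finset.mem_powerset]
      refine ⟨hAU', ?_⟩
      by_contra hcon
      push_neg at hcon
      have hAcard : A.card + k ≤ m := by omega
      have hAle : A.card ≤ m - k := by omega
      have hkm : k ≤ m := by
        have := Finset.card_le_card hAU'; omega
      obtain ⟨T0, hAT0, hT0U', hT0card⟩ :=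
        Finset.exists_subsuperset_card_eq hAU' hAle (by omega)
      have hxT0 : x ∉ T0 := fun hc => (Finset.notMem_erase x U) (hT0U' hc)
      set S0 := insert x T0 with hS0
      have hS0card : S0.card = m - k + 1 := by
        rw [hS0, Finset.card_insert_of_notMem hxT0, hT0card]
      have hS0U : S0 ⊆ U :=
        Finset.insert_subset hxU (hT0U'.trans (Finset.erase_subset x U))
      obtain ⟨𝒞, hch𝒞, hmem𝒞, hcard𝒞⟩ :=
        exists_chain_between k S0 U hS0U (by omega)
      have h𝒞𝒜 : ∀ T ∈ 𝒞, T ∈ 𝒜 := by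
        intro T hT
        obtain ⟨hS0T, hTU⟩ := hmem𝒞 T hT
        have hxT : x ∈ T := hS0T (Finset.mem_insert_self x T0)
        rw [hmemp T hxT, h𝒜1eq, Finset.mem_filter, Finset.mem_powerset]
        have hTcard : m - k + 1 ≤ T.card := hS0card ▸ Finset.card_le_card hS0T
        have hTecard : T.card - 1 = (T.erase x).card := by
          rw [Finset.card_erase_of_mem hxT]
        refine ⟨Finset.erase_subset_erase x hTU, ?_⟩
        omega
      have hAnot : A ∉ 𝒞 := by
        intro hc
        have := (hmem𝒞 A hc).1 (Finset.mem_insert_self x T0)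
        exact hA.2 this
      have hsubA : insert A 𝒞 ⊆ 𝒜 := by
        intro T hT
        rcases Finset.mem_insert.mp hT with rfl | hT
        · exact hA.1
        · exact h𝒞𝒜 T hT
      have hchA : IsChain (· ⊆ ·) ((insert A 𝒞 : Finset (Finset α)) : Set (Finset α)) := by
        rw [Finset.coe_insert]
        apply hch𝒞.insert
        intro T hT _
        exact Or.inl ((hAT0.trans (Finset.subset_insert x T0)).trans (hmem𝒞 T hT).1)
      have := hch _ hsubA hchA
      rw [Finset.card_insert_of_notMem hAnot, hcard𝒞] at this
      omega
    have hF0card : F0.card = ucBound m k := by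
      have := card_filter_large U' k
      rw [hU'card] at this
      exact this
    have h𝒜0eq : 𝒜0 = F0 :=
      Finset.eq_of_subset_of_card_le h𝒜0sub (by omega)
    -- final characterization
    ext S
    rw [Finset.mem_filter, Finset.mem_powerset, hU]
    by_cases hxS : x ∈ S
    · rw [hmemp S hxS, h𝒜1eq, Finset.mem_filter, Finset.mem_powerset]
      have hScard : 1 ≤ S.card := Finset.card_pos.mpr ⟨x, hxS⟩
      have hSe : (S.erase x).card = S.card - 1 := Finset.card_erase_of_mem hxS
      constructor
      · rintro ⟨hsubU', hc⟩
        refine ⟨?_, by omega⟩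
        intro a ha
        rcases eq_or_ne a x with rfl | hax
        · exact hxU
        · exact Finset.erase_subset x U (hsubU' (Finset.mem_erase.mpr ⟨hax, ha⟩))
      · rintro ⟨hsubU, hc⟩
        exact ⟨Finset.erase_subset_erase x hsubU, by omega⟩
    · have hS𝒜 : S ∈ 𝒜 ↔ S ∈ 𝒜0 := by
        rw [h𝒜0, Finset.mem_filter]
        exact ⟨fun hS => ⟨hS, hxS⟩, fun hS => hS.1⟩
      rw [hS𝒜, h𝒜0eq, hF0, Finset.mem_filter, Finset.mem_powerset, hU',
        Finset.subset_erase]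
      constructor
      · rintro ⟨⟨hsubU, _⟩, hc⟩
        exact ⟨hsubU, by omega⟩
      · rintro ⟨hsubU, hc⟩
        exact ⟨⟨hsubU, hxS⟩, by omega⟩



/-- Equality |𝒜| = ∑_{i=0}^{ℓ} C(n,i) holds iff 𝒜 is the family of all
subsets of [n] of size at least n − ℓ. -/
theorem union_closed_card_eq_iff (n ℓ : ℕ) (𝒜 : Finset (Finset (Fin n)))
    (hne : ∃ A ∈ 𝒜, A.Nonempty)
    (huc : ∀ X ∈ 𝒜, ∀ Y ∈ 𝒜, X ∪ Y ∈ 𝒜)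
    (huniv : 𝒜.sup id = Finset.univ)
    (hchain : ∃ 𝒞 ⊆ 𝒜, IsChain (· ⊆ ·) (𝒞 : Set (Finset (Fin n))) ∧ 𝒞.card = ℓ + 1)
    (hmax : ∀ 𝒞 ⊆ 𝒜, IsChain (· ⊆ ·) (𝒞 : Set (Finset (Fin n))) → 𝒞.card ≤ ℓ + 1) :
    𝒜.card = ∑ i ∈ Finset.range (ℓ + 1), n.choose i ↔
      𝒜 = Finset.univ.filter (fun A : Finset (Fin n) => n - ℓ ≤ A.card) := by
  have hUcard : (Finset.univ : Finset (Fin n)).card = n := by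
    rw [Finset.card_univ, Fintype.card_fin]
  have hconv : (Finset.univ.powerset.filter
      (fun S : Finset (Fin n) => (Finset.univ : Finset (Fin n)).card + 1 ≤ S.card + (ℓ + 1)))
      = Finset.univ.filter (fun A : Finset (Fin n) => n - ℓ ≤ A.card) := by
    rw [Finset.powerset_univ]
    apply Finset.filter_congr
    intro S _
    rw [hUcard]
    omega
  constructor
  · intro hcard
    have := uc_card_eq n Finset.univ (ℓ + 1) 𝒜 hUcard huc hmax huniv hcard
    rw [hconv] at this
    exact this
  · intro heq
    rw [heq, ← hconv, hUcard]
    have := card_filter_large (Finset.univ : Finset (Fin n)) (ℓ + 1)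
    rw [hUcard] at this
    exact this
end

section
/- For any union-closed family 𝒜 with universe [n] and length ℓ, there exists an element y ∈ [n] that belongs to at most ∑_{i=0}^{ℓ} C(n−1, i) of the member sets of 𝒜. -/
open Finset

private lemma pascal_sum_aux (m k : ℕ) :
    ∑ i ∈ Finset.range (k+1), (m+1).choose i =
      ∑ i ∈ Finset.range (k+1), m.choose i + ∑ i ∈ Finset.range k, m.choose i := by
  induction k with
  | zero => simp
  | succ k ih =>
      rw [Finset.sum_range_succ, ih, Finset.sum_range_succ (n := k+1),
        Finset.sum_range_succ (n := k), Nat.choose_succ_succ]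
      ring

private lemma chain_greatest {α : Type*} [DecidableEq α] {𝒞 : Finset (Finset α)}
    (hc : IsChain (· ⊆ ·) (𝒞 : Set (Finset α))) (hne : 𝒞.Nonempty) :
    ∃ M ∈ 𝒞, ∀ X ∈ 𝒞, X ⊆ M := by
  obtain ⟨M, hM, hmax⟩ := 𝒞.exists_maximal hne
  refine ⟨M, hM, fun X hX => ?_⟩
  rcases eq_or_ne X M with rfl | hxm
  · exact Finset.Subset.refl _
  · rcases hc hX hM hxm with h | h
    · exact h
    · exact hmax hX h

private lemma union_closed_height_bound {α : Type*} [DecidableEq α] :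
    ∀ (s : Finset α) (ℓ : ℕ) (ℬ : Finset (Finset α)),
      (∀ A ∈ ℬ, A ⊆ s) →
      (∀ A ∈ ℬ, ∀ B ∈ ℬ, A ∪ B ∈ ℬ) →
      (∀ 𝒞 ⊆ ℬ, IsChain (· ⊆ ·) (𝒞 : Set (Finset α)) → 𝒞.card ≤ ℓ + 1) →
      ℬ.card ≤ ∑ i ∈ Finset.range (ℓ + 1), s.card.choose i := by
  intro s
  induction s using Finset.induction_on with
  | empty =>
      intro ℓ ℬ hsub huc hmax
      have h1 : ℬ ⊆ {∅} := by
        intro A hA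
        simp [Finset.subset_empty.mp (hsub A hA)]
      calc ℬ.card ≤ ({∅} : Finset (Finset α)).card := Finset.card_le_card h1
        _ = 1 := by simp
        _ ≤ ∑ i ∈ Finset.range (ℓ + 1), (∅ : Finset α).card.choose i := by
            have h0 : (0 : ℕ) ∈ Finset.range (ℓ + 1) := by simp
            have := Finset.single_le_sum
              (f := fun i => (∅ : Finset α).card.choose i)
              (fun i _ => Nat.zero_le _) h0
            simpa using this
  | @insert a t ha ih =>
      intro ℓ ℬ hsub huc hmax
      classical
      set ℬ₀ := ℬ.filter (fun A => a ∉ A) with hℬ₀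
      set ℱ₁ := ℬ.filter (fun A => a ∈ A) with hℱ₁
      set ℬ₁ := ℱ₁.image (fun A => A.erase a) with hℬ₁
      -- cardinalities
      have hcards : ℬ₀.card + ℱ₁.card = ℬ.card := by
        rw [hℬ₀, hℱ₁, Finset.filter_not]
        exact Finset.card_sdiff_add_card_eq_card (Finset.filter_subset _ _)
      have hcard1 : ℱ₁.card = ℬ₁.card := by
        rw [hℬ₁]
        refine (Finset.card_image_of_injOn ?_).symm
        intro A hA B hB h
        have h' : A.erase a = B.erase a := h
        have hAa : a ∈ A := (Finset.mem_filter.mp hA).2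
        have hBa : a ∈ B := (Finset.mem_filter.mp hB).2
        rw [← Finset.insert_erase hAa, ← Finset.insert_erase hBa, h']
      -- ℬ₁ facts
      have hB1sub : ∀ X ∈ ℬ₁, X ⊆ t := by
        intro X hX
        obtain ⟨A, hA, rfl⟩ := Finset.mem_image.mp hX
        have hAmem : A ∈ ℬ := (Finset.mem_filter.mp hA).1
        intro x hx
        have hxA : x ∈ A := Finset.mem_of_mem_erase hx
        have hxne : x ≠ a := Finset.ne_of_mem_erase hx
        have := hsub A hAmem hxA
        rcases Finset.mem_insert.mp this with h | h
        · exact absurd h hxne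
        · exact h
      have hB1uc : ∀ X ∈ ℬ₁, ∀ Y ∈ ℬ₁, X ∪ Y ∈ ℬ₁ := by
        intro X hX Y hY
        obtain ⟨A, hA, rfl⟩ := Finset.mem_image.mp hX
        obtain ⟨B, hB, rfl⟩ := Finset.mem_image.mp hY
        have hA' := Finset.mem_filter.mp hA
        have hB' := Finset.mem_filter.mp hB
        have hAB : A ∪ B ∈ ℱ₁ := by
          rw [hℱ₁]
          exact Finset.mem_filter.mpr ⟨huc A hA'.1 B hB'.1,
            Finset.mem_union_left _ hA'.2⟩
        refine Finset.mem_image.mpr ⟨A ∪ B, hAB, ?_⟩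
        exact Finset.erase_union_distrib A B a
      have hB1max : ∀ 𝒞 ⊆ ℬ₁, IsChain (· ⊆ ·) (𝒞 : Set (Finset α)) → 𝒞.card ≤ ℓ + 1 := by
        intro 𝒞 h𝒞 hchain
        have hnoa : ∀ X ∈ 𝒞, a ∉ X := by
          intro X hX
          obtain ⟨A, _, rfl⟩ := Finset.mem_image.mp (h𝒞 hX)
          exact Finset.notMem_erase a A
        set 𝒞' := 𝒞.image (fun X => insert a X) with h𝒞'
        have hcard : 𝒞'.card = 𝒞.card := by
          rw [h𝒞']
          apply Finset.card_image_of_injOn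
          intro X hX Y hY h
          have h' : insert a X = insert a Y := h
          have : (insert a X).erase a = (insert a Y).erase a := by rw [h']
          rwa [Finset.erase_insert (hnoa X hX), Finset.erase_insert (hnoa Y hY)] at this
        have hsub' : 𝒞' ⊆ ℬ := by
          intro Z hZ
          obtain ⟨X, hX, rfl⟩ := Finset.mem_image.mp hZ
          obtain ⟨A, hA, rfl⟩ := Finset.mem_image.mp (h𝒞 hX)
          have hA' := Finset.mem_filter.mp hA
          rw [Finset.insert_erase hA'.2]
          exact hA'.1
        have hchain' : IsChain (· ⊆ ·) (𝒞' : Set (Finset α)) := by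
          intro x hx y hy hxy
          simp only [h𝒞', Finset.coe_image, Set.mem_image, Finset.mem_coe] at hx hy
          obtain ⟨X, hX, rfl⟩ := hx
          obtain ⟨Y, hY, rfl⟩ := hy
          have hXY : X ≠ Y := fun h => hxy (by rw [h])
          rcases hchain hX hY hXY with h | h
          · exact Or.inl (Finset.insert_subset_insert a h)
          · exact Or.inr (Finset.insert_subset_insert a h)
        have := hmax 𝒞' hsub' hchain'
        omega
      have hB1card : ℬ₁.card ≤ ∑ i ∈ Finset.range (ℓ + 1), t.card.choose i :=
        ih ℓ ℬ₁ hB1sub hB1uc hB1max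
      -- ℬ₀ facts
      have hB0sub : ∀ A ∈ ℬ₀, A ⊆ t := by
        intro A hA
        have hA' := Finset.mem_filter.mp hA
        intro x hx
        rcases Finset.mem_insert.mp (hsub A hA'.1 hx) with h | h
        · exact absurd (h ▸ hx) hA'.2
        · exact h
      have hB0uc : ∀ A ∈ ℬ₀, ∀ B ∈ ℬ₀, A ∪ B ∈ ℬ₀ := by
        intro A hA B hB
        have hA' := Finset.mem_filter.mp hA
        have hB' := Finset.mem_filter.mp hB
        refine Finset.mem_filter.mpr ⟨huc A hA'.1 B hB'.1, ?_⟩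
        simp only [Finset.mem_union]
        tauto
      -- chain bound for ℬ₀, if ℱ₁ is nonempty
      rcases Finset.eq_empty_or_nonempty ℱ₁ with hF1e | hF1ne
      · -- no set contains a : ℬ = ℬ₀
        have hBB0 : ℬ = ℬ₀ := by
          apply Finset.Subset.antisymm
          · intro A hA
            refine Finset.mem_filter.mpr ⟨hA, fun haA => ?_⟩
            have : A ∈ ℱ₁ := Finset.mem_filter.mpr ⟨hA, haA⟩
            rw [hF1e] at this
            exact absurd this (Finset.notMem_empty A)
          · exact Finset.filter_subset _ _
        have hmax0 : ∀ 𝒞 ⊆ ℬ₀, IsChain (· ⊆ ·) (𝒞 : Set (Finset α)) → 𝒞.card ≤ ℓ + 1 := by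
          intro 𝒞 h𝒞 hc
          exact hmax 𝒞 (h𝒞.trans (Finset.filter_subset _ _)) hc
        have := ih ℓ ℬ₀ hB0sub hB0uc hmax0
        rw [hBB0]
        refine this.trans (Finset.sum_le_sum fun i _ => ?_)
        exact Nat.choose_le_choose i (by
          rw [Finset.card_insert_of_notMem ha]; omega)
      · obtain ⟨B, hB⟩ := hF1ne
        have hB' := Finset.mem_filter.mp hB
        have hB0chain : ∀ 𝒞 ⊆ ℬ₀, IsChain (· ⊆ ·) (𝒞 : Set (Finset α)) → 𝒞.card ≤ ℓ := by
          intro 𝒞 h𝒞 hc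
          rcases Finset.eq_empty_or_nonempty 𝒞 with rfl | hne
          · simp
          · obtain ⟨M, hM, hMg⟩ := chain_greatest hc hne
            have hMmem : M ∈ ℬ := (Finset.mem_filter.mp (h𝒞 hM)).1
            set D := M ∪ B with hD
            have hDmem : D ∈ ℬ := huc M hMmem B hB'.1
            have haD : a ∈ D := Finset.mem_union_right _ hB'.2
            have hDnot : D ∉ 𝒞 := by
              intro hcon
              exact (Finset.mem_filter.mp (h𝒞 hcon)).2 haD
            have hchain' : IsChain (· ⊆ ·) ((insert D 𝒞 : Finset (Finset α)) : Set (Finset α)) := by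
              intro x hx y hy hxy
              simp only [Finset.coe_insert, Set.mem_insert_iff, Finset.mem_coe] at hx hy
              rcases hx with rfl | hx
              · rcases hy with rfl | hy
                · exact absurd rfl hxy
                · exact Or.inr ((hMg y hy).trans Finset.subset_union_left)
              · rcases hy with rfl | hy
                · exact Or.inl ((hMg x hx).trans Finset.subset_union_left)
                · exact hc hx hy hxy
            have hsub' : insert D 𝒞 ⊆ ℬ := by
              intro X hX
              rcases Finset.mem_insert.mp hX with rfl | hX
              · exact hDmem
              · exact (Finset.mem_filter.mp (h𝒞 hX)).1
            have := hmax _ hsub' hchain'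
            rw [Finset.card_insert_of_notMem hDnot] at this
            omega
        have hB0card : ℬ₀.card ≤ ∑ i ∈ Finset.range ℓ, t.card.choose i := by
          rcases ℓ with _ | k
          · -- ℓ = 0 : ℬ₀ must be empty
            have h0 : ℬ₀ = ∅ := by
              by_contra h
              obtain ⟨A, hA⟩ := Finset.nonempty_of_ne_empty h
              have := hB0chain {A} (by simpa using hA)
                (by simp [Set.subsingleton_singleton.isChain])
              simp at this
            simp [h0]
          · exact ih k ℬ₀ hB0sub hB0uc hB0chain
        -- put it together
        have hins : (insert a t).card = t.card + 1 := Finset.card_insert_of_notMem ha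
        calc ℬ.card = ℬ₀.card + ℬ₁.card := by omega
          _ ≤ ∑ i ∈ Finset.range ℓ, t.card.choose i
              + ∑ i ∈ Finset.range (ℓ + 1), t.card.choose i := by omega
          _ = ∑ i ∈ Finset.range (ℓ + 1), (t.card + 1).choose i := by
              rw [pascal_sum_aux]; omega
          _ = ∑ i ∈ Finset.range (ℓ + 1), (insert a t).card.choose i := by rw [hins]

/-- In any union-closed family with universe [n] and length ℓ, some element
y ∈ [n] belongs to at most ∑_{i=0}^{ℓ} C(n−1,i) member sets. -/
theorem union_closed_rare_element (n ℓ : ℕ) (hn : 0 < n)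
    (𝒜 : Finset (Finset (Fin n)))
    (hne : ∃ A ∈ 𝒜, A.Nonempty)
    (huc : ∀ X ∈ 𝒜, ∀ Y ∈ 𝒜, X ∪ Y ∈ 𝒜)
    (huniv : 𝒜.sup id = Finset.univ)
    (hchain : ∃ 𝒞 ⊆ 𝒜, IsChain (· ⊆ ·) (𝒞 : Set (Finset (Fin n))) ∧ 𝒞.card = ℓ + 1)
    (hmax : ∀ 𝒞 ⊆ 𝒜, IsChain (· ⊆ ·) (𝒞 : Set (Finset (Fin n))) → 𝒞.card ≤ ℓ + 1) :
    ∃ y : Fin n, (𝒜.filter (fun A => y ∈ A)).card ≤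
      ∑ i ∈ Finset.range (ℓ + 1), (n - 1).choose i := by
  classical
  set y : Fin n := ⟨0, hn⟩ with hy
  refine ⟨y, ?_⟩
  set ℱ := 𝒜.filter (fun A => y ∈ A) with hℱ
  set ℬ := ℱ.image (fun A => A.erase y) with hℬ
  set s : Finset (Fin n) := Finset.univ.erase y with hs
  have hscard : s.card = n - 1 := by
    rw [hs, Finset.card_erase_of_mem (Finset.mem_univ y)]
    simp
  have hcard : ℱ.card = ℬ.card := by
    rw [hℬ]
    refine (Finset.card_image_of_injOn ?_).symm
    intro A hA B hB h
    have h' : A.erase y = B.erase y := h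
    have hAy : y ∈ A := (Finset.mem_filter.mp hA).2
    have hBy : y ∈ B := (Finset.mem_filter.mp hB).2
    rw [← Finset.insert_erase hAy, ← Finset.insert_erase hBy, h']
  have hsub : ∀ X ∈ ℬ, X ⊆ s := by
    intro X hX
    obtain ⟨A, _, rfl⟩ := Finset.mem_image.mp hX
    intro x hx
    rw [hs]
    exact Finset.mem_erase.mpr ⟨Finset.ne_of_mem_erase hx, Finset.mem_univ x⟩
  have hucB : ∀ X ∈ ℬ, ∀ Y ∈ ℬ, X ∪ Y ∈ ℬ := by
    intro X hX Y hY
    obtain ⟨A, hA, rfl⟩ := Finset.mem_image.mp hX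
    obtain ⟨B, hB, rfl⟩ := Finset.mem_image.mp hY
    have hA' := Finset.mem_filter.mp hA
    have hB' := Finset.mem_filter.mp hB
    have hAB : A ∪ B ∈ ℱ := Finset.mem_filter.mpr
      ⟨huc A hA'.1 B hB'.1, Finset.mem_union_left _ hA'.2⟩
    exact Finset.mem_image.mpr ⟨A ∪ B, hAB, Finset.erase_union_distrib A B y⟩
  have hmaxB : ∀ 𝒞 ⊆ ℬ, IsChain (· ⊆ ·) (𝒞 : Set (Finset (Fin n))) → 𝒞.card ≤ ℓ + 1 := by
    intro 𝒞 h𝒞 hc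
    have hnoy : ∀ X ∈ 𝒞, y ∉ X := by
      intro X hX
      obtain ⟨A, _, rfl⟩ := Finset.mem_image.mp (h𝒞 hX)
      exact Finset.notMem_erase y A
    set 𝒞' := 𝒞.image (fun X => insert y X) with h𝒞'
    have hcard' : 𝒞'.card = 𝒞.card := by
      rw [h𝒞']
      apply Finset.card_image_of_injOn
      intro X hX Y hY h
      have h' : insert y X = insert y Y := h
      have : (insert y X).erase y = (insert y Y).erase y := by rw [h']
      rwa [Finset.erase_insert (hnoy X hX), Finset.erase_insert (hnoy Y hY)] at this
    have hsub' : 𝒞' ⊆ 𝒜 := by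
      intro Z hZ
      obtain ⟨X, hX, rfl⟩ := Finset.mem_image.mp hZ
      obtain ⟨A, hA, rfl⟩ := Finset.mem_image.mp (h𝒞 hX)
      have hA' := Finset.mem_filter.mp hA
      rw [Finset.insert_erase hA'.2]
      exact hA'.1
    have hchain' : IsChain (· ⊆ ·) (𝒞' : Set (Finset (Fin n))) := by
      intro x hx y' hy' hxy
      simp only [h𝒞', Finset.coe_image, Set.mem_image, Finset.mem_coe] at hx hy'
      obtain ⟨X, hX, rfl⟩ := hx
      obtain ⟨Y, hY, rfl⟩ := hy'
      have hXY : X ≠ Y := fun h => hxy (by rw [h])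
      rcases hc hX hY hXY with h | h
      · exact Or.inl (Finset.insert_subset_insert y h)
      · exact Or.inr (Finset.insert_subset_insert y h)
    have := hmax 𝒞' hsub' hchain'
    omega
  have := union_closed_height_bound s ℓ ℬ hsub hucB hmaxB
  rw [hscard] at this
  omega
end

section
/- For all integers 0 ≤ k ≤ n and 0 ≤ m ≤ n, the identity ∑_{i=0}^{k} C(n, i) = ∑_{i=0}^{m} C(m, i) · ∑_{j=0}^{k−i} C(n−m, j) holds, where sums over negative upper limits are empty. -/
lemma partial_vandermonde (a b k : ℕ) :
    ∑ t ∈ Finset.range (k + 1), (a + b).choose t =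
      ∑ i ∈ Finset.range (k + 1), a.choose i *
        ∑ j ∈ Finset.range (k + 1 - i), b.choose j := by
  induction k with
  | zero => simp
  | succ k ih =>
    rw [Finset.sum_range_succ, ih]
    have hsplit : ∀ i ∈ Finset.range (k + 2),
        a.choose i * ∑ j ∈ Finset.range (k + 2 - i), b.choose j =
        a.choose i * ∑ j ∈ Finset.range (k + 1 - i), b.choose j
          + a.choose i * b.choose (k + 1 - i) := by
      intro i hi
      rw [Finset.mem_range] at hi
      have h : k + 2 - i = (k + 1 - i) + 1 := by omega
      rw [h, Finset.sum_range_succ, mul_add]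
    rw [Finset.sum_congr rfl hsplit, Finset.sum_add_distrib]
    congr 1
    · have h0 : k + 1 - (k + 1) = 0 := by omega
      rw [eq_comm, Finset.sum_range_succ, h0]
      simp
    · rw [Nat.add_choose_eq, Finset.Nat.sum_antidiagonal_eq_sum_range_succ_mk]

/-- Vandermonde-type identity for partial sums of binomial coefficients:
∑_{i=0}^{k} C(n,i) = ∑_{i=0}^{m} C(m,i) ∑_{j=0}^{k−i} C(n−m,j),
where the inner sum is empty when k − i < 0. -/
theorem partial_binomial_identity (n k m : ℕ) (hk : k ≤ n) (hm : m ≤ n) :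
    ∑ i ∈ Finset.range (k + 1), n.choose i =
      ∑ i ∈ Finset.range (m + 1), m.choose i *
        ∑ j ∈ Finset.range (k + 1 - i), (n - m).choose j := by
  have h := partial_vandermonde m (n - m) k
  rw [Nat.add_sub_cancel' hm] at h
  rw [h]
  set f : ℕ → ℕ := fun i => m.choose i * ∑ j ∈ Finset.range (k + 1 - i), (n - m).choose j with hf
  have hz : ∀ i ∈ Finset.range (max m k + 1), i ∉ Finset.range (k + 1) → f i = 0 := by
    intro i _ hi
    rw [Finset.mem_range, not_lt] at hi
    simp [hf, Nat.sub_eq_zero_of_le hi]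
  have hz' : ∀ i ∈ Finset.range (max m k + 1), i ∉ Finset.range (m + 1) → f i = 0 := by
    intro i _ hi
    rw [Finset.mem_range, not_lt] at hi
    simp [hf, Nat.choose_eq_zero_of_lt hi]
  exact (Finset.sum_subset (Finset.range_subset_range.2 (by omega)) hz).trans
    (Finset.sum_subset (Finset.range_subset_range.2 (by omega : m + 1 ≤ max m k + 1)) hz').symm
end

section
/- Let 𝒜 be union-closed with universe [n] and maximum chain [n] = C₁ ⊋ ⋯ ⊋ C_{ℓ+1}. For i ∈ [ℓ], define 𝒞ᵢ = {X ∈ 𝒜 : Cᵢ \ C_{i+1} ⊆ X and X ∩ (⋃_{j<i} (C_j \ C_{j+1})) = ∅} and 𝒟ᵢ = {X \ (Cᵢ \ C_{i+1}) : X ∈ 𝒞ᵢ}. If C_{i+1} ≠ ∅, then 𝒟ᵢ is union-closed (and contains the nonempty set C_{i+1}). -/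
open Finset in
/-- With a maximum chain [n] = C 0 ⊋ ⋯ ⊋ C ℓ in the union-closed family 𝒜,
for i < ℓ let 𝒞ᵢ = {X ∈ 𝒜 : C i \ C (i+1) ⊆ X, X ∩ ⋃_{j<i}(C j \ C (j+1)) = ∅}
and 𝒟ᵢ = {X \ (C i \ C (i+1)) : X ∈ 𝒞ᵢ}.  If C (i+1) ≠ ∅ then 𝒟ᵢ is
union-closed and contains the nonempty set C (i+1).
(Here `C i` plays the role of `C_{i+1}` in the paper.) -/
theorem Di_union_closed (n ℓ : ℕ) (𝒜 : Finset (Finset (Fin n)))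
    (hne : ∃ A ∈ 𝒜, A.Nonempty)
    (huc : ∀ X ∈ 𝒜, ∀ Y ∈ 𝒜, X ∪ Y ∈ 𝒜)
    (huniv : 𝒜.sup id = Finset.univ)
    (C : ℕ → Finset (Fin n))
    (hC0 : C 0 = Finset.univ)
    (hmem : ∀ i ≤ ℓ, C i ∈ 𝒜)
    (hmono : ∀ i j, i < j → j ≤ ℓ → C j ⊂ C i)
    (hmax : ∀ 𝒞 ⊆ 𝒜, IsChain (· ⊆ ·) (𝒞 : Set (Finset (Fin n))) → 𝒞.card ≤ ℓ + 1)
    (i : ℕ) (hi : i < ℓ) (hCne : C (i + 1) ≠ ∅) :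
    (∀ X ∈ ((𝒜.filter (fun X => C i \ C (i+1) ⊆ X ∧
          X ∩ (Finset.range i).biUnion (fun j => C j \ C (j+1)) = ∅)).image
            (fun X => X \ (C i \ C (i+1)))),
     ∀ Y ∈ ((𝒜.filter (fun X => C i \ C (i+1) ⊆ X ∧
          X ∩ (Finset.range i).biUnion (fun j => C j \ C (j+1)) = ∅)).image
            (fun X => X \ (C i \ C (i+1)))),
       X ∪ Y ∈ ((𝒜.filter (fun X => C i \ C (i+1) ⊆ X ∧
          X ∩ (Finset.range i).biUnion (fun j => C j \ C (j+1)) = ∅)).image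
            (fun X => X \ (C i \ C (i+1))))) ∧
    C (i + 1) ∈ ((𝒜.filter (fun X => C i \ C (i+1) ⊆ X ∧
          X ∩ (Finset.range i).biUnion (fun j => C j \ C (j+1)) = ∅)).image
            (fun X => X \ (C i \ C (i+1)))) := by
  constructor
  · rintro X hX Y hY
    simp only [mem_image, mem_filter] at hX hY ⊢
    obtain ⟨X', ⟨hX'A, hX'sub, hX'emp⟩, rfl⟩ := hX
    obtain ⟨Y', ⟨hY'A, hY'sub, hY'emp⟩, rfl⟩ := hY
    refine ⟨X' ∪ Y', ⟨huc _ hX'A _ hY'A, hX'sub.trans subset_union_left, ?_⟩, ?_⟩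
    · rw [union_inter_distrib_right, hX'emp, hY'emp, union_empty]
    · rw [union_sdiff_distrib]
  · simp only [mem_image, mem_filter]
    refine ⟨C i, ⟨hmem i hi.le, sdiff_subset, ?_⟩, ?_⟩
    · rw [← Finset.disjoint_iff_inter_eq_empty, Finset.disjoint_biUnion_right]
      intro j hj
      rw [mem_range] at hj
      have hsub : C i ⊆ C (j + 1) := by
        rcases eq_or_lt_of_le (Nat.succ_le_of_lt hj) with h | h
        · subst h; exact Finset.Subset.refl _
        · exact (hmono _ _ h hi.le).subset
      exact disjoint_sdiff_self_right.mono_left hsub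
    · have hsub : C (i + 1) ⊆ C i := (hmono i (i+1) (Nat.lt_succ_self i) (Nat.succ_le_of_lt hi)).subset
      rw [sdiff_sdiff_right_self, inf_eq_inter, inter_eq_right.mpr hsub]
end

section
/- Let 𝒜 be union-closed with universe [n] and maximum chain [n] = C₁ ⊋ ⋯ ⊋ C_{ℓ+1}, and define 𝒞ᵢ and 𝒟ᵢ as above. Then 𝒜 \ {C_{ℓ+1}} = ⋃_{i=1}^{ℓ} 𝒞ᵢ, the 𝒞ᵢ are pairwise disjoint, |𝒟ᵢ| = |𝒞ᵢ| for each i, and consequently |𝒜| = 1 + ∑_{i=1}^{ℓ} |𝒟ᵢ|. -/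
open Finset in
/-- With a maximum chain [n] = C 0 ⊋ ⋯ ⊋ C ℓ in the union-closed family 𝒜,
setting 𝒞ᵢ and 𝒟ᵢ as in the paper (for 0 ≤ i < ℓ, with `C i` playing the role
of `C_{i+1}`): 𝒜 \ {C ℓ} = ⋃_{i<ℓ} 𝒞ᵢ, the 𝒞ᵢ are pairwise disjoint,
|𝒟ᵢ| = |𝒞ᵢ|, and |𝒜| = 1 + ∑_{i<ℓ} |𝒟ᵢ|. -/
theorem card_eq_one_add_sum_Di (n ℓ : ℕ) (𝒜 : Finset (Finset (Fin n)))
    (hne : ∃ A ∈ 𝒜, A.Nonempty)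
    (huc : ∀ X ∈ 𝒜, ∀ Y ∈ 𝒜, X ∪ Y ∈ 𝒜)
    (huniv : 𝒜.sup id = Finset.univ)
    (C : ℕ → Finset (Fin n))
    (hC0 : C 0 = Finset.univ)
    (hmem : ∀ i ≤ ℓ, C i ∈ 𝒜)
    (hmono : ∀ i j, i < j → j ≤ ℓ → C j ⊂ C i)
    (hmax : ∀ 𝒞 ⊆ 𝒜, IsChain (· ⊆ ·) (𝒞 : Set (Finset (Fin n))) → 𝒞.card ≤ ℓ + 1) :
    𝒜.erase (C ℓ) = (Finset.range ℓ).biUnion (fun i =>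
        𝒜.filter (fun X => C i \ C (i+1) ⊆ X ∧
          X ∩ (Finset.range i).biUnion (fun j => C j \ C (j+1)) = ∅)) ∧
    (∀ i < ℓ, ∀ j < ℓ, i ≠ j →
      Disjoint
        (𝒜.filter (fun X => C i \ C (i+1) ⊆ X ∧
          X ∩ (Finset.range i).biUnion (fun j' => C j' \ C (j'+1)) = ∅))
        (𝒜.filter (fun X => C j \ C (j+1) ⊆ X ∧
          X ∩ (Finset.range j).biUnion (fun j' => C j' \ C (j'+1)) = ∅))) ∧
    (∀ i < ℓ,
      ((𝒜.filter (fun X => C i \ C (i+1) ⊆ X ∧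
          X ∩ (Finset.range i).biUnion (fun j => C j \ C (j+1)) = ∅)).image
            (fun X => X \ (C i \ C (i+1)))).card =
      (𝒜.filter (fun X => C i \ C (i+1) ⊆ X ∧
          X ∩ (Finset.range i).biUnion (fun j => C j \ C (j+1)) = ∅)).card) ∧
    𝒜.card = 1 + ∑ i ∈ Finset.range ℓ,
      ((𝒜.filter (fun X => C i \ C (i+1) ⊆ X ∧
          X ∩ (Finset.range i).biUnion (fun j => C j \ C (j+1)) = ∅)).image
            (fun X => X \ (C i \ C (i+1)))).card := by
  classical
  -- subset relations within the chain
  have hsub : ∀ j k, j ≤ k → k ≤ ℓ → C k ⊆ C j := by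
    intro j k h hk
    rcases Nat.eq_or_lt_of_le h with rfl | h
    · exact Finset.Subset.refl _
    · exact (hmono j k h hk).subset
  -- any member of 𝒜 comparable with the whole chain equals some C j
  have hnochain : ∀ Y ∈ 𝒜, (∀ j ≤ ℓ, Y ⊆ C j ∨ C j ⊆ Y) → ∃ j ≤ ℓ, Y = C j := by
    intro Y hY hcomp
    by_contra h
    push_neg at h
    have himg : ((Finset.range (ℓ+1)).image C).card = ℓ + 1 := by
      rw [Finset.card_image_of_injOn, Finset.card_range]
      intro a ha b hb hab
      simp only [Finset.coe_range, Set.mem_Iio, Nat.lt_succ_iff] at ha hb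
      by_contra hne'
      rcases Nat.lt_or_ge a b with h' | h'
      · exact (hmono a b h' hb).ne hab.symm
      · exact (hmono b a (lt_of_le_of_ne h' (fun e => hne' e.symm)) ha).ne hab
    have hYnot : Y ∉ (Finset.range (ℓ+1)).image C := by
      intro hmem'
      rcases Finset.mem_image.mp hmem' with ⟨j, hj, hjE⟩
      exact h j (Nat.lt_succ_iff.mp (Finset.mem_range.mp hj)) hjE.symm
    have hcard : (insert Y ((Finset.range (ℓ+1)).image C)).card = ℓ + 2 := by
      rw [Finset.card_insert_of_notMem hYnot, himg]
    have hS𝒜 : insert Y ((Finset.range (ℓ+1)).image C) ⊆ 𝒜 := by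
      intro A hA
      rcases Finset.mem_insert.mp hA with rfl | hA
      · exact hY
      · rcases Finset.mem_image.mp hA with ⟨j, hj, rfl⟩
        exact hmem j (Nat.lt_succ_iff.mp (Finset.mem_range.mp hj))
    have hchain : IsChain (· ⊆ ·)
        ((insert Y ((Finset.range (ℓ+1)).image C) : Finset (Finset (Fin n))) :
          Set (Finset (Fin n))) := by
      intro A hA B hB hAB
      simp only [Finset.coe_insert, Set.mem_insert_iff, Finset.coe_image,
        Set.mem_image, Finset.mem_coe, Finset.mem_range, Nat.lt_succ_iff] at hA hB
      rcases hA with rfl | ⟨a, ha, rfl⟩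
      · rcases hB with rfl | ⟨b, hb, rfl⟩
        · exact absurd rfl hAB
        · exact (hcomp b hb).imp id id
      · rcases hB with rfl | ⟨b, hb, rfl⟩
        · exact ((hcomp a ha).imp id id).symm
        · rcases Nat.le_total a b with h' | h'
          · exact Or.inr (hsub a b h' hb)
          · exact Or.inl (hsub b a h' ha)
    have := hmax _ hS𝒜 hchain
    omega
  -- if X avoids all C j \ C (j+1) for j < i, then X ⊆ C i
  have hsubCi : ∀ (X : Finset (Fin n)), ∀ i ≤ ℓ,
      (∀ j < i, X ∩ (C j \ C (j+1)) = ∅) → X ⊆ C i := by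
    intro X i
    induction i with
    | zero => intro _ _; rw [hC0]; exact Finset.subset_univ X
    | succ i ih =>
      intro hi h
      have hXi : X ⊆ C i := ih (Nat.le_of_succ_le hi) (fun j hj => h j (Nat.lt_succ_of_lt hj))
      intro x hx
      by_contra hxc
      have hx' : x ∈ X ∩ (C i \ C (i+1)) :=
        Finset.mem_inter.mpr ⟨hx, Finset.mem_sdiff.mpr ⟨hXi hx, hxc⟩⟩
      rw [h i (Nat.lt_succ_self i)] at hx'
      exact absurd hx' (Finset.notMem_empty x)
  -- translating the biUnion-intersection condition
  have hintiff : ∀ (X : Finset (Fin n)) (i : ℕ),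
      X ∩ (Finset.range i).biUnion (fun j => C j \ C (j+1)) = ∅ ↔
        ∀ j < i, X ∩ (C j \ C (j+1)) = ∅ := by
    intro X i
    constructor
    · intro h j hj
      apply Finset.eq_empty_of_forall_notMem
      intro x hx
      rcases Finset.mem_inter.mp hx with ⟨hx1, hx2⟩
      have hx' : x ∈ X ∩ (Finset.range i).biUnion (fun j => C j \ C (j+1)) :=
        Finset.mem_inter.mpr ⟨hx1, Finset.mem_biUnion.mpr ⟨j, Finset.mem_range.mpr hj, hx2⟩⟩
      rw [h] at hx'
      exact absurd hx' (Finset.notMem_empty x)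
    · intro h
      apply Finset.eq_empty_of_forall_notMem
      intro x hx
      rcases Finset.mem_inter.mp hx with ⟨hx1, hx2⟩
      rcases Finset.mem_biUnion.mp hx2 with ⟨j, hj, hx3⟩
      have hx' : x ∈ X ∩ (C j \ C (j+1)) := Finset.mem_inter.mpr ⟨hx1, hx3⟩
      rw [h j (Finset.mem_range.mp hj)] at hx'
      exact absurd hx' (Finset.notMem_empty x)
  -- nonemptiness of the difference sets
  have hdnon : ∀ i < ℓ, (C i \ C (i+1)).Nonempty := by
    intro i hi
    obtain ⟨a, h1, h2⟩ := Finset.exists_of_ssubset (hmono i (i+1) (Nat.lt_succ_self i) hi)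
    exact ⟨a, Finset.mem_sdiff.mpr ⟨h1, h2⟩⟩
  -- the covering statement
  have hcover : ∀ X ∈ 𝒜, X ≠ C ℓ → ∃ i < ℓ, (C i \ C (i+1) ⊆ X ∧
      X ∩ (Finset.range i).biUnion (fun j => C j \ C (j+1)) = ∅) := by
    intro X hX hXne
    have hexists : ∃ i, i < ℓ ∧ (X ∩ (C i \ C (i+1))).Nonempty := by
      by_contra hcon
      push_neg at hcon
      have hXl : X ⊆ C ℓ := by
        apply hsubCi X ℓ le_rfl
        intro j hj
        rcases Finset.eq_empty_or_nonempty (X ∩ (C j \ C (j+1))) with he | hne'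
        · exact he
        · exact hcon j hj
      have hcomp : ∀ j ≤ ℓ, X ⊆ C j ∨ C j ⊆ X :=
        fun j hj => Or.inl (hXl.trans (hsub j ℓ hj le_rfl))
      rcases hnochain X hX hcomp with ⟨j, hj, rfl⟩
      rcases Nat.lt_or_eq_of_le hj with h' | h'
      · exact (hmono j ℓ h' le_rfl).not_subset hXl
      · exact hXne (congrArg C h')
    set i := Nat.find hexists with hidef
    obtain ⟨hiℓ, hinon⟩ := Nat.find_spec hexists
    have hjempty : ∀ j < i, X ∩ (C j \ C (j+1)) = ∅ := by
      intro j hj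
      rcases Finset.eq_empty_or_nonempty (X ∩ (C j \ C (j+1))) with he | hne'
      · exact he
      · exact absurd ⟨hj.trans hiℓ, hne'⟩ (Nat.find_min hexists hj)
    have hXi : X ⊆ C i := hsubCi X i hiℓ.le hjempty
    refine ⟨i, hiℓ, ?_, (hintiff X i).mpr hjempty⟩
    by_contra hns
    rcases Finset.not_subset.mp hns with ⟨a, haD, haX⟩
    rcases Finset.mem_sdiff.mp haD with ⟨haCi, haCi1⟩
    have hY𝒜 : X ∪ C (i+1) ∈ 𝒜 := huc X hX (C (i+1)) (hmem (i+1) hiℓ)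
    have hYsubCi : X ∪ C (i+1) ⊆ C i :=
      Finset.union_subset hXi (hsub i (i+1) (Nat.le_succ i) hiℓ)
    have hC1Y : C (i+1) ⊆ X ∪ C (i+1) := Finset.subset_union_right
    obtain ⟨b, hb⟩ := hinon
    rcases Finset.mem_inter.mp hb with ⟨hbX, hbD⟩
    rcases Finset.mem_sdiff.mp hbD with ⟨hbCi, hbC1⟩
    have haY : a ∉ X ∪ C (i+1) := by
      simp only [Finset.mem_union]
      push_neg
      exact ⟨haX, haCi1⟩
    have hcomp : ∀ j ≤ ℓ, X ∪ C (i+1) ⊆ C j ∨ C j ⊆ X ∪ C (i+1) := by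
      intro j hj
      rcases Nat.lt_or_ge i j with h' | h'
      · exact Or.inr ((hsub (i+1) j h' hj).trans hC1Y)
      · exact Or.inl (hYsubCi.trans (hsub j i h' hiℓ.le))
    rcases hnochain _ hY𝒜 hcomp with ⟨j, hj, hYeq⟩
    rcases Nat.lt_or_ge i j with h' | h'
    · have hbj : b ∈ C j := by
        rw [← hYeq]
        exact Finset.mem_union_left _ hbX
      exact hbC1 (hsub (i+1) j h' hj hbj)
    · have haj : a ∈ X ∪ C (i+1) := by
        rw [hYeq]
        exact hsub j i h' hiℓ.le haCi
      exact haY haj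
  -- Part 1
  have part1 : 𝒜.erase (C ℓ) = (Finset.range ℓ).biUnion (fun i =>
      𝒜.filter (fun X => C i \ C (i+1) ⊆ X ∧
        X ∩ (Finset.range i).biUnion (fun j => C j \ C (j+1)) = ∅)) := by
    ext X
    simp only [Finset.mem_erase, Finset.mem_biUnion, Finset.mem_range, Finset.mem_filter]
    constructor
    · rintro ⟨hXne, hX⟩
      obtain ⟨i, hi, h1, h2⟩ := hcover X hX hXne
      exact ⟨i, hi, hX, h1, h2⟩
    · rintro ⟨i, hi, hX, h1, h2⟩
      refine ⟨?_, hX⟩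
      rintro rfl
      obtain ⟨a, ha⟩ := hdnon i hi
      have haX : a ∈ C ℓ := h1 ha
      have : a ∈ C (i+1) := hsub (i+1) ℓ hi le_rfl haX
      exact (Finset.mem_sdiff.mp ha).2 this
  -- Part 2
  have part2 : ∀ i < ℓ, ∀ j < ℓ, i ≠ j →
      Disjoint
        (𝒜.filter (fun X => C i \ C (i+1) ⊆ X ∧
          X ∩ (Finset.range i).biUnion (fun j' => C j' \ C (j'+1)) = ∅))
        (𝒜.filter (fun X => C j \ C (j+1) ⊆ X ∧
          X ∩ (Finset.range j).biUnion (fun j' => C j' \ C (j'+1)) = ∅)) := by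
    have aux : ∀ i j, i < j → j < ℓ →
        Disjoint
          (𝒜.filter (fun X => C i \ C (i+1) ⊆ X ∧
            X ∩ (Finset.range i).biUnion (fun j' => C j' \ C (j'+1)) = ∅))
          (𝒜.filter (fun X => C j \ C (j+1) ⊆ X ∧
            X ∩ (Finset.range j).biUnion (fun j' => C j' \ C (j'+1)) = ∅)) := by
      intro i j hij hj
      rw [Finset.disjoint_left]
      intro X hXi hXj
      rcases Finset.mem_filter.mp hXi with ⟨_, h1, _⟩
      rcases Finset.mem_filter.mp hXj with ⟨_, _, h2⟩
      obtain ⟨b, hb⟩ := hdnon i (hij.trans hj)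
      have hbX : b ∈ X := h1 hb
      have hempty := (hintiff X j).mp h2 i hij
      have : b ∈ X ∩ (C i \ C (i+1)) := Finset.mem_inter.mpr ⟨hbX, hb⟩
      rw [hempty] at this
      exact absurd this (Finset.notMem_empty b)
    intro i hi j hj hij
    rcases Nat.lt_or_ge i j with h' | h'
    · exact aux i j h' hj
    · exact (aux j i (lt_of_le_of_ne h' (fun e => hij e.symm)) hi).symm
  -- Part 3
  have part3 : ∀ i < ℓ,
      ((𝒜.filter (fun X => C i \ C (i+1) ⊆ X ∧
          X ∩ (Finset.range i).biUnion (fun j => C j \ C (j+1)) = ∅)).image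
            (fun X => X \ (C i \ C (i+1)))).card =
      (𝒜.filter (fun X => C i \ C (i+1) ⊆ X ∧
          X ∩ (Finset.range i).biUnion (fun j => C j \ C (j+1)) = ∅)).card := by
    intro i _
    apply Finset.card_image_of_injOn
    intro X hX Y hY h
    rcases Finset.mem_filter.mp (Finset.mem_coe.mp hX) with ⟨_, hX1, _⟩
    rcases Finset.mem_filter.mp (Finset.mem_coe.mp hY) with ⟨_, hY1, _⟩
    have := congrArg (· ∪ (C i \ C (i+1))) h
    simpa [Finset.sdiff_union_of_subset hX1, Finset.sdiff_union_of_subset hY1] using this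
  refine ⟨part1, part2, part3, ?_⟩
  -- Part 4
  have hCl𝒜 : C ℓ ∈ 𝒜 := hmem ℓ le_rfl
  have hpos : 0 < 𝒜.card := Finset.card_pos.mpr ⟨C ℓ, hCl𝒜⟩
  have hcard1 : 𝒜.card = 1 + (𝒜.erase (C ℓ)).card := by
    rw [Finset.card_erase_of_mem hCl𝒜]
    omega
  rw [hcard1, part1, Finset.card_biUnion]
  · congr 1
    apply Finset.sum_congr rfl
    intro i hi
    exact (part3 i (Finset.mem_range.mp hi)).symm
  · intro i hi j hj hij
    exact part2 i (Finset.mem_range.mp hi) j (Finset.mem_range.mp hj) hij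
end

section
/- With notation as above, for each i ∈ [ℓ]: the universe of 𝒟ᵢ has size at most n − i, and the length of 𝒟ᵢ is at most ℓ. -/
open Finset in
/-- With notation as in the paper (maximum chain [n] = C 0 ⊋ ⋯ ⊋ C ℓ, `C i`
playing the role of `C_{i+1}`), for each i < ℓ the universe of 𝒟ᵢ has size at
most n − (i+1), and every chain in 𝒟ᵢ has size at most ℓ + 1 (length ≤ ℓ). -/
theorem Di_universe_and_length (n ℓ : ℕ) (𝒜 : Finset (Finset (Fin n)))
    (hne : ∃ A ∈ 𝒜, A.Nonempty)
    (huc : ∀ X ∈ 𝒜, ∀ Y ∈ 𝒜, X ∪ Y ∈ 𝒜)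
    (huniv : 𝒜.sup id = Finset.univ)
    (C : ℕ → Finset (Fin n))
    (hC0 : C 0 = Finset.univ)
    (hmem : ∀ i ≤ ℓ, C i ∈ 𝒜)
    (hmono : ∀ i j, i < j → j ≤ ℓ → C j ⊂ C i)
    (hmax : ∀ 𝒞 ⊆ 𝒜, IsChain (· ⊆ ·) (𝒞 : Set (Finset (Fin n))) → 𝒞.card ≤ ℓ + 1)
    (i : ℕ) (hi : i < ℓ) :
    ((((𝒜.filter (fun X => C i \ C (i+1) ⊆ X ∧
          X ∩ (Finset.range i).biUnion (fun j => C j \ C (j+1)) = ∅)).image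
            (fun X => X \ (C i \ C (i+1)))).sup id).card ≤ n - (i + 1)) ∧
    (∀ 𝒞 ⊆ ((𝒜.filter (fun X => C i \ C (i+1) ⊆ X ∧
          X ∩ (Finset.range i).biUnion (fun j => C j \ C (j+1)) = ∅)).image
            (fun X => X \ (C i \ C (i+1)))),
      IsChain (· ⊆ ·) (𝒞 : Set (Finset (Fin n))) → 𝒞.card ≤ ℓ + 1) := by
  classical
  set D : Finset (Fin n) := C i \ C (i+1) with hDdef
  set 𝒟 := (𝒜.filter (fun X => C i \ C (i+1) ⊆ X ∧
          X ∩ (Finset.range i).biUnion (fun j => C j \ C (j+1)) = ∅)).image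
            (fun X => X \ (C i \ C (i+1))) with h𝒟def
  -- every member of 𝒟 is disjoint from C j \ C (j+1) for all j ≤ i
  have hdisj : ∀ Y ∈ 𝒟, ∀ j ≤ i, Disjoint Y (C j \ C (j+1)) := by
    intro Y hY j hj
    obtain ⟨X, hX, rfl⟩ := Finset.mem_image.mp hY
    rw [Finset.mem_filter] at hX
    obtain ⟨hXA, hsub, hint⟩ := hX
    rcases eq_or_lt_of_le hj with rfl | hj'
    · exact Finset.sdiff_disjoint
    · have hX' : Disjoint X ((Finset.range i).biUnion (fun j => C j \ C (j+1))) :=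
        Finset.disjoint_iff_inter_eq_empty.mpr hint
      have : Disjoint X (C j \ C (j+1)) :=
        hX'.mono_right (Finset.subset_biUnion_of_mem (fun j => C j \ C (j+1)) (Finset.mem_range.mpr hj'))
      exact this.mono_left Finset.sdiff_subset
  constructor
  · -- universe bound
    set S := (Finset.range (i+1)).biUnion (fun j => C j \ C (j+1)) with hSdef
    have hsup : 𝒟.sup id ⊆ Finset.univ \ S := by
      show 𝒟.sup id ≤ Finset.univ \ S
      apply Finset.sup_le
      intro Y hY
      simp only [id]
      intro x hx
      rw [Finset.mem_sdiff]
      refine ⟨Finset.mem_univ _, ?_⟩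
      rw [hSdef, Finset.mem_biUnion]
      rintro ⟨j, hj, hxj⟩
      exact (Finset.disjoint_left.mp
        (hdisj Y hY j (Nat.lt_succ_iff.mp (Finset.mem_range.mp hj)))) hx hxj
    have hScard : i + 1 ≤ S.card := by
      rw [hSdef, Finset.card_biUnion]
      · calc i + 1 = ∑ _j ∈ Finset.range (i+1), 1 := by simp
          _ ≤ ∑ j ∈ Finset.range (i+1), (C j \ C (j+1)).card := by
              apply Finset.sum_le_sum
              intro j hj
              have hj' : j + 1 ≤ ℓ :=
                Nat.succ_le_of_lt (lt_of_lt_of_le (Finset.mem_range.mp hj) (Nat.succ_le_of_lt hi))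
              have := hmono j (j+1) (Nat.lt_succ_self j) hj'
              have hne' : (C j \ C (j+1)).Nonempty := by
                rw [Finset.sdiff_nonempty]
                exact fun h => (this.2 h).elim
              exact Nat.one_le_iff_ne_zero.mpr (Finset.card_ne_zero_of_mem hne'.choose_spec)
      · intro a ha b hb hab
        rcases Nat.lt_or_ge a b with h | h
        · have hsub : C b ⊆ C (a+1) := by
            rcases eq_or_lt_of_le (Nat.succ_le_of_lt h) with h' | h'
            · exact h' ▸ subset_rfl
            · exact (hmono (a+1) b h'
                (le_trans (Nat.lt_succ_iff.mp (Finset.mem_range.mp hb)) (Nat.le_of_lt hi))).subset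
          refine Finset.disjoint_left.mpr fun x hxa hxb => ?_
          rw [Finset.mem_sdiff] at hxa hxb
          exact hxa.2 (hsub hxb.1)
        · have h' : b < a := lt_of_le_of_ne h (Ne.symm hab)
          have hsub : C a ⊆ C (b+1) := by
            rcases eq_or_lt_of_le (Nat.succ_le_of_lt h') with h'' | h''
            · exact h'' ▸ subset_rfl
            · exact (hmono (b+1) a h''
                (le_trans (Nat.lt_succ_iff.mp (Finset.mem_range.mp ha)) (Nat.le_of_lt hi))).subset
          refine Finset.disjoint_left.mpr fun x hxa hxb => ?_
          rw [Finset.mem_sdiff] at hxa hxb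
          exact hxb.2 (hsub hxa.1)
    calc (𝒟.sup id).card ≤ (Finset.univ \ S).card := Finset.card_le_card hsup
      _ = n - S.card := by
          rw [Finset.card_sdiff_of_subset (Finset.subset_univ _)]
          simp
      _ ≤ n - (i + 1) := Nat.sub_le_sub_left hScard n
  · -- chain bound
    intro 𝒞 h𝒞sub hchain
    have hprops : ∀ Y ∈ 𝒞, Y ∪ D ∈ 𝒜 ∧ Disjoint Y D := by
      intro Y hY
      have hY𝒟 := h𝒞sub hY
      obtain ⟨X, hX, rfl⟩ := Finset.mem_image.mp hY𝒟
      rw [Finset.mem_filter] at hX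
      obtain ⟨hXA, hsub, -⟩ := hX
      constructor
      · rwa [Finset.sdiff_union_of_subset hsub]
      · exact Finset.sdiff_disjoint
    have hrec : ∀ Y ∈ 𝒞, (Y ∪ D) \ D = Y := by
      intro Y hY
      rw [Finset.union_sdiff_right, Finset.sdiff_eq_self_iff_disjoint.mpr (hprops Y hY).2]
    have hcard : 𝒞.card = (𝒞.image (fun Y => Y ∪ D)).card := by
      rw [Finset.card_image_of_injOn]
      intro Y1 h1 Y2 h2 h
      rw [← hrec Y1 (Finset.mem_coe.mp h1), ← hrec Y2 (Finset.mem_coe.mp h2)]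
      exact congrArg (· \ D) h
    rw [hcard]
    apply hmax
    · intro Z hZ
      obtain ⟨Y, hY, rfl⟩ := Finset.mem_image.mp hZ
      exact (hprops Y hY).1
    · rintro Z1 h1 Z2 h2 hne'
      simp only [Finset.coe_image, Set.mem_image, Finset.mem_coe] at h1 h2
      obtain ⟨Y1, hY1, rfl⟩ := h1
      obtain ⟨Y2, hY2, rfl⟩ := h2
      have hYne : Y1 ≠ Y2 := fun h => hne' (by rw [h])
      rcases hchain hY1 hY2 hYne with h | h
      · exact Or.inl (Finset.union_subset_union_left h)
      · exact Or.inr (Finset.union_subset_union_left h)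
end

section
/- Let 𝒜 be a union-closed family with universe [n] and length ℓ ≥ 2. Then for every nonnegative integer p, |𝒜| ≤ (ℓ^p − 1)/(ℓ − 1) + 2^n (1 − 2^{−ℓ})^p. -/
open Finset

/-- A nonempty union-closed finset family contains its sup. -/
lemma uc_sup_mem {n : ℕ} (𝒜 : Finset (Finset (Fin n)))
    (huc : ∀ X ∈ 𝒜, ∀ Y ∈ 𝒜, X ∪ Y ∈ 𝒜) (h : 𝒜.Nonempty) :
    𝒜.sup id ∈ 𝒜 := by
  have w : ∀ x ∈ (↑𝒜 : Set (Finset (Fin n))), ∀ y ∈ (↑𝒜 : Set (Finset (Fin n))),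
      x ⊔ y ∈ (↑𝒜 : Set (Finset (Fin n))) := by
    intro x hx y hy
    simpa [Finset.sup_eq_union] using huc x hx y hy
  have := Finset.sup'_mem (↑𝒜 : Set (Finset (Fin n))) w 𝒜 h id (fun i hi => hi)
  rwa [Finset.sup'_eq_sup] at this

/-- Any family is contained in the interval [inf, sup], so has at most 2^m sets. -/
lemma uc_card_le_pow {n : ℕ} (𝒜 : Finset (Finset (Fin n))) :
    (𝒜.card : ℝ) ≤ 2 ^ ((𝒜.sup id \ 𝒜.inf id).card) := by
  have h : 𝒜.card ≤ ((𝒜.sup id \ 𝒜.inf id).powerset).card := by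
    apply Finset.card_le_card_of_injOn (fun A => A \ 𝒜.inf id)
    · intro A hA
      rw [Finset.mem_coe, Finset.mem_powerset]
      exact Finset.sdiff_subset_sdiff (Finset.le_iff_subset.mp (Finset.le_sup (f := id) hA)) le_rfl
    · intro A hA B hB hAB
      have hIa : 𝒜.inf id ⊆ A := Finset.inf_le (f := id) hA
      have hIb : 𝒜.inf id ⊆ B := Finset.inf_le (f := id) hB
      have hA' : A \ 𝒜.inf id ∪ 𝒜.inf id = A := Finset.sdiff_union_of_subset hIa
      have hB' : B \ 𝒜.inf id ∪ 𝒜.inf id = B := Finset.sdiff_union_of_subset hIb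
      have hAB' : A \ 𝒜.inf id = B \ 𝒜.inf id := hAB
      rw [← hA', ← hB', hAB']
  calc (𝒜.card : ℝ) ≤ (((𝒜.sup id \ 𝒜.inf id).powerset).card : ℝ) := by exact_mod_cast h
    _ = 2 ^ ((𝒜.sup id \ 𝒜.inf id).card) := by
        rw [Finset.card_powerset]; push_cast; ring

/-- The main engine: union-closed families with all chains of size ≤ ℓ+1 satisfy
the geometric bound. -/
lemma uc_engine {n ℓ : ℕ} (hℓ : 2 ≤ ℓ) :
    ∀ (p : ℕ) (𝒜 : Finset (Finset (Fin n))),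
      (∀ X ∈ 𝒜, ∀ Y ∈ 𝒜, X ∪ Y ∈ 𝒜) →
      (∀ 𝒞 ⊆ 𝒜, IsChain (· ⊆ ·) (𝒞 : Set (Finset (Fin n))) → 𝒞.card ≤ ℓ + 1) →
      (𝒜.card : ℝ) ≤ (∑ i ∈ Finset.range p, (ℓ : ℝ) ^ i)
        + (1 - (2 : ℝ)⁻¹ ^ ℓ) ^ p * 2 ^ ((𝒜.sup id \ 𝒜.inf id).card) := by
  have hq0 : (0 : ℝ) ≤ 1 - (2 : ℝ)⁻¹ ^ ℓ := by
    have : (2 : ℝ)⁻¹ ^ ℓ ≤ 1 := pow_le_one₀ (by norm_num) (by norm_num)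
    linarith
  intro p
  induction p with
  | zero =>
    intro 𝒜 _ _
    simpa using uc_card_le_pow 𝒜
  | succ p ih =>
    -- inner lemma: refined bound with chain-size parameter r
    have inner : ∀ (r : ℕ), r ≤ ℓ → ∀ (𝒜 : Finset (Finset (Fin n))),
        (∀ X ∈ 𝒜, ∀ Y ∈ 𝒜, X ∪ Y ∈ 𝒜) →
        (∀ 𝒞 ⊆ 𝒜, IsChain (· ⊆ ·) (𝒞 : Set (Finset (Fin n))) → 𝒞.card ≤ r + 1) →
        (𝒜.card : ℝ) ≤ 1 + r * (∑ i ∈ Finset.range p, (ℓ : ℝ) ^ i)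
          + (1 - (2 : ℝ)⁻¹ ^ ℓ) ^ p *
            (2 ^ ((𝒜.sup id \ 𝒜.inf id).card) * (1 - (2 : ℝ)⁻¹ ^ r)) := by
      intro r
      induction r with
      | zero =>
        intro _ 𝒜 huc hch
        have hcard : 𝒜.card ≤ 1 := by
          rw [Finset.card_le_one]
          intro a ha b hb
          have key : ∀ x ∈ 𝒜, ∀ y ∈ 𝒜, x ⊆ y → x = y := by
            intro x hx y hy hxy
            by_contra hne
            have hsub : ({x, y} : Finset (Finset (Fin n))) ⊆ 𝒜 := by
              intro z hz
              rcases Finset.mem_insert.mp hz with rfl | hz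
              · exact hx
              · rw [Finset.mem_singleton.mp hz]; exact hy
            have hchain : IsChain (· ⊆ ·) (({x, y} : Finset (Finset (Fin n))) : Set (Finset (Fin n))) := by
              rw [Finset.coe_insert, Finset.coe_singleton]
              intro a ha b hb hne'
              rcases ha with rfl | ha <;> rcases hb with rfl | hb
              · exact absurd rfl hne'
              · rw [Set.mem_singleton_iff] at hb; subst hb; exact Or.inl hxy
              · rw [Set.mem_singleton_iff] at ha; subst ha; exact Or.inr hxy
              · rw [Set.mem_singleton_iff] at ha hb; subst ha; subst hb; exact absurd rfl hne'
            have h2 : ({x, y} : Finset (Finset (Fin n))).card = 2 := by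
              rw [Finset.card_insert_of_notMem (by simpa using hne), Finset.card_singleton]
            have := hch _ hsub hchain
            omega
          have hab : a ∪ b ∈ 𝒜 := huc a ha b hb
          have h1 : a = a ∪ b := key a ha _ hab Finset.subset_union_left
          have h2 : b = a ∪ b := key b hb _ hab Finset.subset_union_right
          exact h1.trans h2.symm
        have : (𝒜.card : ℝ) ≤ 1 := by exact_mod_cast hcard
        have hpos : (0:ℝ) ≤ (1 - (2 : ℝ)⁻¹ ^ ℓ) ^ p *
            (2 ^ ((𝒜.sup id \ 𝒜.inf id).card) * (1 - (2 : ℝ)⁻¹ ^ 0)) := by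
          simp
        push_cast
        linarith
      | succ r ihr =>
        intro hr 𝒜 huc hch
        have hrℓ : r ≤ ℓ := by omega
        set I := 𝒜.inf id with hI
        set U := 𝒜.sup id with hU
        rcases Finset.eq_empty_or_nonempty 𝒜 with hemp | hne
        · subst hemp
          have h1 : (2 : ℝ)⁻¹ ^ (r+1) ≤ 1 := pow_le_one₀ (by norm_num) (by norm_num)
          have h2 : (0:ℝ) ≤ (1 - (2 : ℝ)⁻¹ ^ ℓ) ^ p := pow_nonneg hq0 p
          have h3 : (0:ℝ) ≤ (2:ℝ) ^ (((∅ : Finset (Finset (Fin n))).sup id \ (∅ : Finset (Finset (Fin n))).inf id).card) := by positivity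
          have hG : (0:ℝ) ≤ ∑ i ∈ Finset.range p, (ℓ : ℝ) ^ i := by positivity
          simp only [Finset.card_empty, Nat.cast_zero]
          nlinarith [mul_nonneg h2 (mul_nonneg h3 (by linarith : (0:ℝ) ≤ 1 - (2:ℝ)⁻¹ ^ (r+1)))]
        · have hUm : U ∈ 𝒜 := uc_sup_mem 𝒜 huc hne
          rcases Finset.eq_empty_or_nonempty (𝒜.erase U) with hsingle | herase
          · -- 𝒜 = {U}
            have hsub : 𝒜 ⊆ {U} := by
              intro A hA
              rcases eq_or_ne A U with rfl | hA'
              · exact Finset.mem_singleton_self _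
              · exact absurd (Finset.mem_erase.mpr ⟨hA', hA⟩) (by simp [hsingle])
            have hcard : 𝒜.card ≤ 1 := le_trans (Finset.card_le_card hsub) (by simp)
            have h1 : (2 : ℝ)⁻¹ ^ (r+1) ≤ 1 := pow_le_one₀ (by norm_num) (by norm_num)
            have h2 : (0:ℝ) ≤ (1 - (2 : ℝ)⁻¹ ^ ℓ) ^ p := pow_nonneg hq0 p
            have h3 : (0:ℝ) ≤ (2:ℝ) ^ ((U \ I).card) := by positivity
            have hG : (0:ℝ) ≤ ∑ i ∈ Finset.range p, (ℓ : ℝ) ^ i := by positivity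
            have : (𝒜.card : ℝ) ≤ 1 := by exact_mod_cast hcard
            push_cast
            nlinarith [mul_nonneg h2 (mul_nonneg h3 (by linarith : (0:ℝ) ≤ 1 - (2:ℝ)⁻¹ ^ (r+1)))]
          · obtain ⟨C, hCM⟩ := Finset.exists_maximal herase
            have hCer : C ∈ 𝒜.erase U := hCM.prop
            have hCmax : ∀ x ∈ 𝒜.erase U, ¬ C < x := fun x hx hlt => lt_irrefl _ (lt_of_lt_of_le hlt (hCM.2 hx hlt.le))
            have hCA : C ∈ 𝒜 := Finset.mem_of_mem_erase hCer
            have hCneU : C ≠ U := Finset.ne_of_mem_erase hCer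
            have hCU : C ⊆ U := Finset.le_iff_subset.mp (Finset.le_sup (f := id) hCA)
            have hIC : I ⊆ C := Finset.le_iff_subset.mp (Finset.inf_le (f := id) hCA)
            have key : ∀ B ∈ 𝒜, B ⊆ C ∨ B ∪ C = U := by
              intro B hB
              have hBC : B ∪ C ∈ 𝒜 := huc B hB C hCA
              by_cases h : B ∪ C = U
              · exact Or.inr h
              · left
                have hmem : B ∪ C ∈ 𝒜.erase U := Finset.mem_erase.mpr ⟨h, hBC⟩
                have hle : C ⊆ B ∪ C := Finset.subset_union_right
                have hCeq : C = B ∪ C := by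
                  rcases eq_or_ne C (B ∪ C) with h' | h'
                  · exact h'
                  · exact absurd (lt_of_le_of_ne hle h') (hCmax _ hmem)
                rw [hCeq]
                exact Finset.subset_union_left
            set ℬ := 𝒜.filter (fun B => B ∪ C = U) with hℬ
            set 𝒜' := 𝒜.filter (fun B => B ⊆ C) with h𝒜'
            have hcover : 𝒜 ⊆ ℬ ∪ 𝒜' := by
              intro B hB
              rcases key B hB with h | h
              · exact Finset.mem_union_right _ (Finset.mem_filter.mpr ⟨hB, h⟩)
              · exact Finset.mem_union_left _ (Finset.mem_filter.mpr ⟨hB, h⟩)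
            have hcard : (𝒜.card : ℝ) ≤ (ℬ.card : ℝ) + (𝒜'.card : ℝ) := by
              have := le_trans (Finset.card_le_card hcover) (Finset.card_union_le ℬ 𝒜')
              exact_mod_cast this
            -- ℬ is union-closed with chains ≤ ℓ + 1
            have hucℬ : ∀ X ∈ ℬ, ∀ Y ∈ ℬ, X ∪ Y ∈ ℬ := by
              intro X hX Y hY
              obtain ⟨hX𝒜, hXC⟩ := Finset.mem_filter.mp hX
              obtain ⟨hY𝒜, hYC⟩ := Finset.mem_filter.mp hY
              refine Finset.mem_filter.mpr ⟨huc X hX𝒜 Y hY𝒜, ?_⟩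
              have hXU : X ⊆ U := Finset.le_iff_subset.mp (Finset.le_sup (f := id) hX𝒜)
              rw [Finset.union_assoc, hYC]
              exact Finset.union_eq_right.mpr hXU
            have hchℬ : ∀ 𝒞 ⊆ ℬ, IsChain (· ⊆ ·) (𝒞 : Set (Finset (Fin n))) → 𝒞.card ≤ ℓ + 1 := by
              intro 𝒞 h𝒞 hchain
              have := hch 𝒞 (h𝒞.trans (Finset.filter_subset _ _)) hchain
              omega
            have hB1 : (ℬ.card : ℝ) ≤ (∑ i ∈ Finset.range p, (ℓ : ℝ) ^ i)
                + (1 - (2 : ℝ)⁻¹ ^ ℓ) ^ p * 2 ^ ((ℬ.sup id \ ℬ.inf id).card) :=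
              ih ℬ hucℬ hchℬ
            -- 𝒜' is union-closed with chains ≤ r + 1
            have huc𝒜' : ∀ X ∈ 𝒜', ∀ Y ∈ 𝒜', X ∪ Y ∈ 𝒜' := by
              intro X hX Y hY
              obtain ⟨hX𝒜, hXC⟩ := Finset.mem_filter.mp hX
              obtain ⟨hY𝒜, hYC⟩ := Finset.mem_filter.mp hY
              exact Finset.mem_filter.mpr ⟨huc X hX𝒜 Y hY𝒜, Finset.union_subset hXC hYC⟩
            have hch𝒜' : ∀ 𝒞 ⊆ 𝒜', IsChain (· ⊆ ·) (𝒞 : Set (Finset (Fin n))) → 𝒞.card ≤ r + 1 := by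
              intro 𝒞 h𝒞 hchain
              have hU𝒞 : U ∉ 𝒞 := by
                intro hmem
                have : U ⊆ C := (Finset.mem_filter.mp (h𝒞 hmem)).2
                exact hCneU (le_antisymm hCU this)
              have hins : (insert U 𝒞) ⊆ 𝒜 := by
                apply Finset.insert_subset hUm
                exact h𝒞.trans (Finset.filter_subset _ _)
              have hchain' : IsChain (· ⊆ ·) ((insert U 𝒞 : Finset (Finset (Fin n))) : Set (Finset (Fin n))) := by
                rw [Finset.coe_insert]
                apply hchain.insert
                intro B hB _
                right
                exact ((Finset.mem_filter.mp (h𝒞 hB)).2).trans hCU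
              have := hch _ hins hchain'
              rw [Finset.card_insert_of_notMem hU𝒞] at this
              omega
            have hB2 : (𝒜'.card : ℝ) ≤ 1 + r * (∑ i ∈ Finset.range p, (ℓ : ℝ) ^ i)
                + (1 - (2 : ℝ)⁻¹ ^ ℓ) ^ p *
                  (2 ^ ((𝒜'.sup id \ 𝒜'.inf id).card) * (1 - (2 : ℝ)⁻¹ ^ r)) :=
              ihr hrℓ 𝒜' huc𝒜' hch𝒜'
            -- dimension bounds
            have hmℬ : (ℬ.sup id \ ℬ.inf id).card ≤ (C \ I).card := by
              apply Finset.card_le_card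
              intro x hx
              obtain ⟨hx1, hx2⟩ := Finset.mem_sdiff.mp hx
              have hxU : x ∈ U := by
                have : ℬ.sup id ⊆ U := Finset.le_iff_subset.mp (Finset.sup_mono (Finset.filter_subset _ _))
                exact this hx1
              have hsub : (U \ C) ∪ I ⊆ ℬ.inf id := by
                rw [← Finset.le_iff_subset]
                apply Finset.le_inf
                intro B hB
                obtain ⟨hB𝒜, hBC⟩ := Finset.mem_filter.mp hB
                apply Finset.union_subset
                · intro y hy
                  obtain ⟨hyU, hyC⟩ := Finset.mem_sdiff.mp hy
                  rw [← hBC] at hyU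
                  rcases Finset.mem_union.mp hyU with h | h
                  · exact h
                  · exact absurd h hyC
                · exact Finset.le_iff_subset.mp (Finset.inf_le (f := id) hB𝒜)
              have hxnot : x ∉ (U \ C) ∪ I := fun h => hx2 (hsub h)
              rw [Finset.mem_union, Finset.mem_sdiff] at hxnot
              push_neg at hxnot
              obtain ⟨h1, h2⟩ := hxnot
              exact Finset.mem_sdiff.mpr ⟨h1 hxU, h2⟩
            have hm𝒜' : (𝒜'.sup id \ 𝒜'.inf id).card ≤ (C \ I).card := by
              apply Finset.card_le_card
              intro x hx
              obtain ⟨hx1, hx2⟩ := Finset.mem_sdiff.mp hx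
              have hxC : x ∈ C := by
                have : 𝒜'.sup id ⊆ C := by
                  rw [← Finset.le_iff_subset]
                  apply Finset.sup_le
                  intro B hB
                  exact Finset.le_iff_subset.mpr (Finset.mem_filter.mp hB).2
                exact this hx1
              have hxI : x ∉ I := by
                intro hxI
                apply hx2
                have : I ⊆ 𝒜'.inf id := Finset.le_iff_subset.mp (Finset.le_inf (fun B hB => Finset.inf_le (f := id) ((Finset.filter_subset _ _) hB)))
                exact this hxI
              exact Finset.mem_sdiff.mpr ⟨hxC, hxI⟩
            have hmc : (C \ I).card + 1 ≤ (U \ I).card := by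
              have hss : C \ I ⊂ U \ I := by
                constructor
                · exact Finset.sdiff_subset_sdiff hCU le_rfl
                · intro hcon
                  obtain ⟨x, hxU, hxC⟩ := Finset.exists_of_ssubset (lt_of_le_of_ne hCU hCneU)
                  have hxI : x ∉ I := fun h => hxC (hIC h)
                  have : x ∈ C \ I := hcon (Finset.mem_sdiff.mpr ⟨hxU, hxI⟩)
                  exact hxC (Finset.mem_sdiff.mp this).1
              exact Finset.card_lt_card hss
            -- arithmetic
            set q : ℝ := 1 - (2 : ℝ)⁻¹ ^ ℓ with hqdef
            set G : ℝ := ∑ i ∈ Finset.range p, (ℓ : ℝ) ^ i with hGdef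
            have hqp : (0:ℝ) ≤ q ^ p := pow_nonneg hq0 p
            have e1 : (2:ℝ) ^ ((ℬ.sup id \ ℬ.inf id).card) ≤ 2 ^ ((C \ I).card) :=
              pow_le_pow_right₀ (by norm_num) hmℬ
            have e2 : (2:ℝ) ^ ((𝒜'.sup id \ 𝒜'.inf id).card) ≤ 2 ^ ((C \ I).card) :=
              pow_le_pow_right₀ (by norm_num) hm𝒜'
            have e3 : (2:ℝ) ^ ((C \ I).card) * 2 ≤ 2 ^ ((U \ I).card) := by
              rw [← pow_succ]
              exact pow_le_pow_right₀ (by norm_num) hmc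
            have hr1 : (0:ℝ) ≤ 1 - (2:ℝ)⁻¹ ^ r := by
              have : (2 : ℝ)⁻¹ ^ r ≤ 1 := pow_le_one₀ (by norm_num) (by norm_num)
              linarith
            have estep : (2:ℝ) ^ ((C \ I).card) * (2 - (2:ℝ)⁻¹ ^ r)
                ≤ 2 ^ ((U \ I).card) * (1 - (2:ℝ)⁻¹ ^ (r+1)) := by
              have hid : (2:ℝ) ^ ((C \ I).card) * (2 - (2:ℝ)⁻¹ ^ r)
                  = ((2:ℝ) ^ ((C \ I).card) * 2) * (1 - (2:ℝ)⁻¹ ^ (r+1)) := by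
                rw [pow_succ]
                ring
              rw [hid]
              apply mul_le_mul_of_nonneg_right e3
              have : (2 : ℝ)⁻¹ ^ (r+1) ≤ 1 := pow_le_one₀ (by norm_num) (by norm_num)
              linarith
            have hBle : (ℬ.card : ℝ) ≤ G + q ^ p * 2 ^ ((C \ I).card) := by
              refine hB1.trans ?_
              have := mul_le_mul_of_nonneg_left e1 hqp
              linarith
            have hA'le : (𝒜'.card : ℝ) ≤ 1 + r * G + q ^ p * (2 ^ ((C \ I).card) * (1 - (2:ℝ)⁻¹ ^ r)) := by
              refine hB2.trans ?_
              have h' : (2:ℝ) ^ ((𝒜'.sup id \ 𝒜'.inf id).card) * (1 - (2:ℝ)⁻¹ ^ r)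
                  ≤ 2 ^ ((C \ I).card) * (1 - (2:ℝ)⁻¹ ^ r) :=
                mul_le_mul_of_nonneg_right e2 hr1
              have := mul_le_mul_of_nonneg_left h' hqp
              linarith
            have hfinal : (ℬ.card : ℝ) + (𝒜'.card : ℝ)
                ≤ 1 + (r+1 : ℕ) * G + q ^ p * (2 ^ ((U \ I).card) * (1 - (2:ℝ)⁻¹ ^ (r+1))) := by
              have hcomb : G + q ^ p * 2 ^ ((C \ I).card)
                  + (1 + r * G + q ^ p * (2 ^ ((C \ I).card) * (1 - (2:ℝ)⁻¹ ^ r)))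
                  = 1 + (r+1 : ℕ) * G + q ^ p * (2 ^ ((C \ I).card) * (2 - (2:ℝ)⁻¹ ^ r)) := by
                push_cast
                ring
              have hq2 := mul_le_mul_of_nonneg_left estep hqp
              linarith
            exact hcard.trans (hfinal.trans (by push_cast; linarith))
    intro 𝒜 huc hch
    have h := inner ℓ le_rfl 𝒜 huc hch
    have hgeom : (∑ i ∈ Finset.range (p+1), (ℓ : ℝ) ^ i)
        = (ℓ : ℝ) * (∑ i ∈ Finset.range p, (ℓ : ℝ) ^ i) + 1 := geom_sum_succ
    have hpow : (1 - (2 : ℝ)⁻¹ ^ ℓ) ^ (p+1) * 2 ^ ((𝒜.sup id \ 𝒜.inf id).card)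
        = (1 - (2 : ℝ)⁻¹ ^ ℓ) ^ p * (2 ^ ((𝒜.sup id \ 𝒜.inf id).card) * (1 - (2 : ℝ)⁻¹ ^ ℓ)) := by
      rw [pow_succ]; ring
    rw [hgeom, hpow]
    linarith

/-- For a union-closed family 𝒜 with universe [n] and length ℓ ≥ 2, and any
nonnegative integer p, |𝒜| ≤ (ℓ^p − 1)/(ℓ − 1) + 2^n (1 − 2^{−ℓ})^p. -/
theorem union_closed_Theta_bound (n ℓ : ℕ) (hℓ : 2 ≤ ℓ)
    (𝒜 : Finset (Finset (Fin n)))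
    (hne : ∃ A ∈ 𝒜, A.Nonempty)
    (huc : ∀ X ∈ 𝒜, ∀ Y ∈ 𝒜, X ∪ Y ∈ 𝒜)
    (huniv : 𝒜.sup id = Finset.univ)
    (hchain : ∃ 𝒞 ⊆ 𝒜, IsChain (· ⊆ ·) (𝒞 : Set (Finset (Fin n))) ∧ 𝒞.card = ℓ + 1)
    (hmax : ∀ 𝒞 ⊆ 𝒜, IsChain (· ⊆ ·) (𝒞 : Set (Finset (Fin n))) → 𝒞.card ≤ ℓ + 1)
    (p : ℕ) :
    (𝒜.card : ℝ) ≤ ((ℓ : ℝ) ^ p - 1) / ((ℓ : ℝ) - 1)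
      + 2 ^ n * (1 - (2 : ℝ)⁻¹ ^ ℓ) ^ p := by
  have h := uc_engine hℓ p 𝒜 huc hmax
  have hgeom : (∑ i ∈ Finset.range p, (ℓ : ℝ) ^ i) = ((ℓ : ℝ) ^ p - 1) / ((ℓ : ℝ) - 1) := by
    apply geom_sum_eq
    have : (2 : ℝ) ≤ (ℓ : ℝ) := by exact_mod_cast hℓ
    linarith
  have hq0 : (0 : ℝ) ≤ 1 - (2 : ℝ)⁻¹ ^ ℓ := by
    have : (2 : ℝ)⁻¹ ^ ℓ ≤ 1 := pow_le_one₀ (by norm_num) (by norm_num)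
    linarith
  have hm : ((𝒜.sup id \ 𝒜.inf id).card) ≤ n := by
    have := Finset.card_le_univ (𝒜.sup id \ 𝒜.inf id)
    simpa using this
  have h2 : (2:ℝ) ^ ((𝒜.sup id \ 𝒜.inf id).card) ≤ 2 ^ n :=
    pow_le_pow_right₀ (by norm_num) hm
  have h3 := mul_le_mul_of_nonneg_left h2 (pow_nonneg hq0 p)
  rw [hgeom] at h
  nlinarith
end

section
/- For all integers 2 ≤ k ≤ n and every nonnegative integer p, ∑_{i=0}^{k} C(n, i) ≤ (k^p − 1)/(k − 1) + 2^n (1 − 2^{−k})^p. -/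
open Finset

def Tb (n k : ℕ) : ℕ := ∑ i ∈ Finset.range (k+1), n.choose i
def Abb (k p : ℕ) : ℕ := ∑ j ∈ Finset.range p, k^j

lemma Tb_eq (n k : ℕ) (h : n ≤ k) : Tb n k = 2^n := by
  unfold Tb
  rw [← Nat.sum_range_choose n]
  exact (Finset.sum_subset (Finset.range_subset_range.2 (by omega))
    (fun i _ hi => Nat.choose_eq_zero_of_lt (by simp only [Finset.mem_range] at hi ⊢; omega))).symm

lemma Tb_le (n k : ℕ) : Tb n k ≤ 2^n := by
  calc Tb n k ≤ Tb n (n+k) :=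
        Finset.sum_le_sum_of_subset (Finset.range_subset_range.2 (by omega))
  _ = 2^n := Tb_eq _ _ (by omega)

lemma Tb_pascal (n k : ℕ) : Tb (n+1) (k+1) = Tb n (k+1) + Tb n k := by
  unfold Tb
  rw [Finset.sum_range_succ' (fun i => (n+1).choose i) (k+1)]
  simp only [Nat.choose_succ_succ, Nat.succ_eq_add_one, Finset.sum_add_distrib, Nat.choose_zero_right]
  rw [Finset.sum_range_succ' (fun i => n.choose i) (k+1)]
  simp only [Nat.choose_zero_right]
  omega

lemma two_pow_sum (k : ℕ) : ∑ m ∈ Finset.range k, 2^m = 2^k - 1 := by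
  induction k with
  | zero => simp
  | succ k ih =>
    rw [Finset.sum_range_succ, ih]
    have h := Nat.one_le_two_pow (n := k)
    rw [pow_succ]
    omega

lemma Tb_rec (k d : ℕ) :
    Tb (k+1+d) (k+1) = Tb d (k+1) + ∑ m ∈ Finset.range (k+1), Tb (d+m) k := by
  induction d with
  | zero =>
    rw [Nat.add_zero, Tb_eq (k+1) (k+1) le_rfl, Tb_eq 0 (k+1) (by omega)]
    have hcong : ∀ m ∈ Finset.range (k+1), Tb (0+m) k = 2^m := fun m hm => by
      rw [Nat.zero_add]
      exact Tb_eq m k (by have := Finset.mem_range.mp hm; omega)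
    rw [Finset.sum_congr rfl hcong, two_pow_sum]
    have h := Nat.one_le_two_pow (n := k)
    rw [pow_succ, pow_zero]
    omega
  | succ d ih =>
    rw [show k+1+(d+1) = (k+1+d)+1 from rfl, Tb_pascal, ih, Tb_pascal]
    have h2 := Finset.sum_range_succ' (fun m => Tb (d+m) k) (k+1)
    have h3 := Finset.sum_range_succ (fun m => Tb (d+m) k) (k+1)
    simp only [Nat.add_zero] at h2 h3
    rw [Finset.sum_congr rfl (fun m _ => by rw [show d+1+m = d+(m+1) by omega] :
      ∀ m ∈ Finset.range (k+1), Tb (d+1+m) k = Tb (d+(m+1)) k)]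
    rw [show k+1+d = d+(k+1) by omega]
    omega

lemma Abb_succ (k p : ℕ) : Abb k (p+1) = 1 + k * Abb k p := by
  unfold Abb
  rw [Finset.sum_range_succ' (fun j => k^j) p]
  simp only [pow_succ, pow_zero]
  rw [← Finset.sum_mul]
  ring

lemma Abb_snoc (k p : ℕ) : Abb k (p+1) = Abb k p + k^p := Finset.sum_range_succ _ _

lemma Abb_ge (k p : ℕ) (hk : 1 ≤ k) : p ≤ Abb k p := by
  calc p = ∑ _j ∈ Finset.range p, 1 := by simp
  _ ≤ Abb k p := Finset.sum_le_sum fun j _ => Nat.one_le_pow _ _ (by omega)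

lemma Abb_ineq (k q : ℕ) :
    Abb (k+1) (q+1) + (k+1) * Abb k (q+1) ≤ 1 + (k+1) * Abb (k+1) (q+1) := by
  induction q with
  | zero => simp [Abb]
  | succ q ih =>
    have h : (k+1) * k^(q+1) ≤ k * (k+1)^(q+1) := by
      calc (k+1)*k^(q+1) = k*((k+1)*k^q) := by ring
      _ ≤ k*((k+1)*(k+1)^q) :=
          Nat.mul_le_mul_left _ (Nat.mul_le_mul_left _ (Nat.pow_le_pow_left (by omega) q))
      _ = k*(k+1)^(q+1) := by ring
    rw [Abb_snoc (k+1) (q+1), Abb_snoc k (q+1)]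
    have e1 : (k+1) * (Abb k (q+1) + k^(q+1)) = (k+1)*Abb k (q+1) + (k+1)*k^(q+1) := by ring
    have e2 : (k+1) * (Abb (k+1) (q+1) + (k+1)^(q+1)) = (k+1)*Abb (k+1) (q+1) + (k+1)*(k+1)^(q+1) := by ring
    have e3 : (k+1)^(q+1) + k*(k+1)^(q+1) = (k+1)*(k+1)^(q+1) := by ring
    rw [e1, e2]
    omega

lemma Tb_tail (n k : ℕ) (h : k ≤ n) : Tb n k + 2^(n-k) ≤ 2^n + 1 := by
  obtain ⟨d, rfl⟩ := Nat.exists_eq_add_of_le h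
  rw [Nat.add_sub_cancel_left]
  have h1 : 2^(k+d) = Tb (k+d) k + ∑ j ∈ Finset.range d, (k+d).choose (k+1+j) := by
    rw [← Tb_eq (k+d) (k+d) le_rfl]
    unfold Tb
    rw [show k+d+1 = (k+1) + d by omega, Finset.sum_range_add]
  have h2 : ∀ j ∈ Finset.range d, d.choose (d-1-j) ≤ (k+d).choose (k+1+j) := by
    intro j hj
    have hjd : j < d := Finset.mem_range.mp hj
    have hs : (k+d).choose (k+1+j) = (k+d).choose (d-1-j) := by
      rw [show d-1-j = (k+d) - (k+1+j) by omega]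
      exact (Nat.choose_symm (by omega)).symm
    rw [hs]
    exact Nat.choose_le_choose _ (by omega)
  have h3 : ∑ j ∈ Finset.range d, d.choose (d-1-j) = 2^d - 1 := by
    rw [Finset.sum_range_reflect (fun m => d.choose m) d]
    have h4 := Nat.sum_range_choose d
    rw [Finset.sum_range_succ] at h4
    have h5 := Nat.one_le_two_pow (n := d)
    simp only [Nat.choose_self] at h4
    omega
  have h6 : ∑ j ∈ Finset.range d, d.choose (d-1-j) ≤ ∑ j ∈ Finset.range d, (k+d).choose (k+1+j) :=
    Finset.sum_le_sum h2
  have h7 := Nat.one_le_two_pow (n := d)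
  omega

lemma pow_mul_inv_pow_le_one {n k : ℕ} (h : n ≤ k) : (2:ℝ)^n * (2:ℝ)⁻¹^k ≤ 1 := by
  rw [inv_pow, ← div_eq_mul_inv, div_le_one (by positivity)]
  exact pow_le_pow_right₀ (by norm_num) h

lemma base1 (n k : ℕ) : (Tb n k : ℝ) ≤ 1 + 2^n * (1 - (2:ℝ)⁻¹^k) := by
  rcases le_or_gt n k with h | h
  · rw [Tb_eq n k h]
    have h3 := pow_mul_inv_pow_le_one h
    push_cast
    nlinarith [h3]
  · have hkn : k ≤ n := le_of_lt h
    have hnat := Tb_tail n k hkn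
    have hx : (2:ℝ)^n * (2:ℝ)⁻¹^k = (2:ℝ)^(n-k) := by
      rw [inv_pow, ← div_eq_mul_inv, eq_comm, eq_div_iff (by positivity), ← pow_add]
      congr 1
      omega
    have hc : (Tb n k : ℝ) + 2^(n-k) ≤ 2^n + 1 := by exact_mod_cast hnat
    linarith [hx ▸ hc]

lemma div_trick {u X Y Z : ℝ} (hu : 0 < u) (h : u*X + u*Y ≤ u*Z) : X + Y ≤ Z := by
  have h2 : u*(X+Y) ≤ u*Z := by rw [mul_add]; exact h
  exact le_of_mul_le_mul_left h2 hu

lemma key_lemma : ∀ p n k : ℕ, (Tb n k : ℝ) ≤ (Abb k p : ℝ) + 2^n * (1 - (2:ℝ)⁻¹^k)^p := by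
  intro p
  induction p with
  | zero =>
    intro n k
    simp only [Abb, Finset.range_zero, Finset.sum_empty, Nat.cast_zero, pow_zero, mul_one,
      zero_add]
    exact_mod_cast Tb_le n k
  | succ p ih =>
    rcases p with _ | q
    · intro n k
      have hA : (Abb k 1 : ℝ) = 1 := by simp [Abb]
      rw [hA, pow_one]
      exact base1 n k
    · intro n k
      rcases k with _ | K
      · -- k = 0
        have hT : Tb n 0 = 1 := by simp [Tb]
        have hA : (1:ℕ) ≤ Abb 0 (q+2) := by rw [Abb_succ]; omega
        have hz : (1 - (2:ℝ)⁻¹^0) = 0 := by norm_num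
        rw [hT, hz, zero_pow (by omega), mul_zero, add_zero]
        exact_mod_cast hA
      · rcases lt_or_ge n (K+1) with h | h
        · -- n ≤ K : direct Bernoulli bound
          rw [Tb_eq n (K+1) (by omega)]
          set x := (2:ℝ)⁻¹^(K+1) with hxdef
          have hx0 : 0 < x := by positivity
          have hx1 : (2:ℝ)^n * x ≤ 1 := pow_mul_inv_pow_le_one (by omega)
          have hxle1 : x ≤ 1 := by
            rw [hxdef]
            exact pow_le_one₀ (by norm_num) (by norm_num)
          have hb : 1 + ((q:ℝ)+2) * (-x) ≤ (1 + -x)^(q+2) := by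
            have := one_add_mul_le_pow (a := -x) (by linarith : (-2:ℝ) ≤ -x) (q+2)
            push_cast at this
            convert this using 2
          have hA : ((q:ℝ)+2) ≤ (Abb (K+1) (q+2) : ℝ) := by
            exact_mod_cast Abb_ge (K+1) (q+2) (by omega)
          have h2n : (0:ℝ) < 2^n := by positivity
          have hb2 : (2:ℝ)^n * (1 - ((q:ℝ)+2)*x) ≤ 2^n * (1-x)^(q+2) := by
            apply mul_le_mul_of_nonneg_left _ h2n.le
            calc (1:ℝ) - ((q:ℝ)+2)*x = 1 + ((q:ℝ)+2)*(-x) := by ring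
            _ ≤ (1 + -x)^(q+2) := hb
            _ = (1-x)^(q+2) := by ring_nf
          have hq2 : (2:ℝ)^n * (((q:ℝ)+2)*x) ≤ ((q:ℝ)+2) := by
            calc (2:ℝ)^n * (((q:ℝ)+2)*x) = ((q:ℝ)+2) * ((2:ℝ)^n * x) := by ring
            _ ≤ ((q:ℝ)+2) * 1 := by
                apply mul_le_mul_of_nonneg_left hx1 (by positivity)
            _ = ((q:ℝ)+2) := by ring
          push_cast [Nat.cast_ofNat] at *
          nlinarith [hb2, hq2, hA]
        · -- n ≥ K+1 : recursion
          obtain ⟨D, rfl⟩ : ∃ D, n = K+1+D := ⟨n - (K+1), by omega⟩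
          have hrec := Tb_rec K D
          have hcast : (Tb (K+1+D) (K+1) : ℝ)
              = (Tb D (K+1) : ℝ) + ∑ m ∈ Finset.range (K+1), (Tb (D+m) K : ℝ) := by
            rw [hrec]; push_cast; ring
          rw [hcast]
          set u := (2:ℝ)⁻¹^K with hu
          have hx : (2:ℝ)⁻¹^(K+1) = u/2 := by rw [pow_succ]; ring
          have hu0 : 0 < u := by positivity
          have hu1 : u ≤ 1 := by
            rw [hu]
            exact pow_le_one₀ (by norm_num) (by norm_num)
          have hKu : (2:ℝ)^(K+1) * u = 2 := by
            rw [hu, inv_pow, pow_succ]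
            field_simp
          -- bound the two pieces by the inductive hypothesis
          have ih1 : (Tb D (K+1) : ℝ) ≤ (Abb (K+1) (q+1) : ℝ) + 2^D * (1 - u/2)^(q+1) := by
            have := ih D (K+1)
            rwa [hx] at this
          have hsum2 : ∑ m ∈ Finset.range (K+1), (2:ℝ)^(D+m) = 2^D * (2^(K+1) - 1) := by
            have hg : ∑ m ∈ Finset.range (K+1), (2:ℝ)^m = (2^(K+1) - 1)/(2-1) :=
              geom_sum_eq (by norm_num) (K+1)
            simp only [pow_add]
            rw [← Finset.mul_sum, hg]
            ring
          have ih2 : ∑ m ∈ Finset.range (K+1), (Tb (D+m) K : ℝ)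
              ≤ (K+1) * (Abb K (q+1) : ℝ) + (2^D * (2^(K+1) - 1)) * (1-u)^(q+1) := by
            calc ∑ m ∈ Finset.range (K+1), (Tb (D+m) K : ℝ)
                ≤ ∑ m ∈ Finset.range (K+1), ((Abb K (q+1) : ℝ) + 2^(D+m) * (1-u)^(q+1)) :=
                  Finset.sum_le_sum (fun m _ => ih (D+m) K)
            _ = (K+1) * (Abb K (q+1) : ℝ)
                + (∑ m ∈ Finset.range (K+1), (2:ℝ)^(D+m)) * (1-u)^(q+1) := by
                rw [Finset.sum_add_distrib, Finset.sum_const, ← Finset.sum_mul]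
                simp [nsmul_eq_mul]
            _ = (K+1) * (Abb K (q+1) : ℝ) + (2^D * (2^(K+1) - 1)) * (1-u)^(q+1) := by
                rw [hsum2]
          -- arithmetic facts
          have hb0 : (0:ℝ) ≤ 1 - u := by linarith
          have hpow : (1-u)^q ≤ (1-u/2)^q := pow_le_pow_left₀ hb0 (by linarith) q
          have hq1 : (2-u)*(1-u)^(q+1) ≤ (2-2*u)*(1-u/2)^(q+1) := by
            calc (2-u)*(1-u)^(q+1) = ((2-2*u)*(1-u/2))*(1-u)^q := by ring
            _ ≤ ((2-2*u)*(1-u/2))*(1-u/2)^q := by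
                apply mul_le_mul_of_nonneg_left hpow (by nlinarith)
            _ = (2-2*u)*(1-u/2)^(q+1) := by ring
          have h2D : (0:ℝ) < 2^D := by positivity
          have key3 : 2^D * (1-u/2)^(q+1) + (2^D * (2^(K+1) - 1)) * (1-u)^(q+1)
              ≤ 2^(K+1+D) * (1-u/2)^(q+2) := by
            apply div_trick hu0
            have e1 : u * ((2^D * ((2:ℝ)^(K+1) - 1)) * (1-u)^(q+1))
                = 2^D * ((2-u)*(1-u)^(q+1)) := by
              have : u * ((2:ℝ)^(K+1) - 1) = 2 - u := by nlinarith [hKu]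
              calc u * ((2^D * ((2:ℝ)^(K+1) - 1)) * (1-u)^(q+1))
                  = 2^D * ((u * ((2:ℝ)^(K+1) - 1)) *(1-u)^(q+1)) := by ring
              _ = 2^D * ((2-u)*(1-u)^(q+1)) := by rw [this]
            have e2 : u * ((2:ℝ)^(K+1+D) * (1-u/2)^(q+2))
                = 2^D * ((2-u) * (1-u/2)^(q+1)) := by
              rw [pow_add]
              calc u * ((2:ℝ)^(K+1) * 2^D * (1-u/2)^(q+2))
                  = 2^D * (((2:ℝ)^(K+1) * u) * ((1-u/2) * (1-u/2)^(q+1))) := by ring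
              _ = 2^D * ((2 * (1-u/2)) * (1-u/2)^(q+1)) := by rw [hKu]; ring
              _ = 2^D * ((2-u) * (1-u/2)^(q+1)) := by ring
            rw [e1, e2]
            have e4 : (2:ℝ)^D * ((2-u) * (1-u/2)^(q+1))
                = u * (2^D * (1-u/2)^(q+1)) + 2^D * ((2-2*u)*(1-u/2)^(q+1)) := by ring
            rw [e4]
            have := mul_le_mul_of_nonneg_left hq1 h2D.le
            linarith
          have keyA : (Abb (K+1) (q+1) : ℝ) + (K+1) * (Abb K (q+1) : ℝ)
              ≤ 1 + (K+1) * (Abb (K+1) (q+1) : ℝ) := by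
            exact_mod_cast Abb_ineq K q
          have hAsucc : (Abb (K+1) (q+2) : ℝ) = 1 + (K+1) * (Abb (K+1) (q+1) : ℝ) := by
            exact_mod_cast Abb_succ (K+1) (q+1)
          rw [hx, hAsucc]
          linarith [ih1, ih2, key3, keyA]




/-- For all 2 ≤ k ≤ n and every nonnegative integer p,
∑_{i=0}^{k} C(n,i) ≤ (k^p − 1)/(k − 1) + 2^n (1 − 2^{−k})^p. -/
theorem binomial_sum_le_Theta (k n p : ℕ) (hk : 2 ≤ k) (hkn : k ≤ n) :
    ((∑ i ∈ Finset.range (k + 1), n.choose i : ℕ) : ℝ) ≤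
      ((k : ℝ) ^ p - 1) / ((k : ℝ) - 1) + 2 ^ n * (1 - (2 : ℝ)⁻¹ ^ k) ^ p := by
  have h := key_lemma p n k
  have hk1 : (k:ℝ) ≠ 1 := by
    have : (2:ℝ) ≤ (k:ℝ) := by exact_mod_cast hk
    linarith
  have hA : (Abb k p : ℝ) = ((k : ℝ) ^ p - 1) / ((k : ℝ) - 1) := by
    unfold Abb
    push_cast
    exact geom_sum_eq hk1 p
  rw [hA] at h
  exact h
end

section
/- For all integers 2 ≤ k ≤ n, ∑_{i=0}^{k} C(n, i) ≤ (k^{p̂} − 1)/(k − 1) + 2^n (1 − 2^{−k})^{p̂}, where p̂ = ⌊(n − k)/log₂(k/(1 − 2^{−k}))⌋ + 1. -/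
open Finset

namespace BT

def SS (n k : ℕ) : ℕ := ∑ i ∈ range (k+1), n.choose i


lemma sum_split (k r : ℕ) :
    SS (k+r) k + ∑ i ∈ Ico (k+1) (k+r+1), (k+r).choose i = 2 ^ (k+r) := by
  unfold SS
  rw [range_eq_Ico, Finset.sum_Ico_consecutive _ (Nat.zero_le _) (by omega), ← range_eq_Ico,
    Nat.sum_range_choose]

lemma D_lower (k r c : ℕ) (hc : c ≤ k) :
    ∑ j ∈ range r, (r+c).choose j ≤ ∑ i ∈ Ico (k+1) (k+r+1), (k+r).choose i := by
  rw [Finset.sum_Ico_eq_sum_range]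
  have h1 : k + r + 1 - (k+1) = r := by omega
  rw [h1, ← Finset.sum_range_reflect (fun j => (r+c).choose j) r]
  apply Finset.sum_le_sum
  intro j hj
  simp only [mem_range] at hj
  have h2 : (k+r).choose (k+1+j) = (k+r).choose (r - 1 - j) := by
    rw [← Nat.choose_symm (show k+1+j ≤ k+r by omega)]
    congr 1; omega
  rw [h2]
  exact Nat.choose_le_choose _ (by omega)

lemma T0 (r : ℕ) : ∑ j ∈ range r, r.choose j + 1 = 2 ^ r := by
  have := Nat.sum_range_choose r
  rw [Finset.sum_range_succ] at this
  simpa using this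

lemma T1 (r : ℕ) : ∑ j ∈ range r, (r+1).choose j + (r + 2) = 2 ^ (r+1) := by
  have := Nat.sum_range_choose (r+1)
  rw [show r+1+1 = r+2 by rfl, Finset.sum_range_succ, Finset.sum_range_succ] at this
  have e1 : (r+1).choose r = r+1 := by
    rw [← Nat.choose_symm (show r ≤ r+1 by omega)]
    simp
  rw [e1, Nat.choose_self] at this
  omega

lemma T2 (r : ℕ) :
    ∑ j ∈ range r, (r+2).choose j + ((r+2).choose 2 + (r + 3)) = 2 ^ (r+2) := by
  have := Nat.sum_range_choose (r+2)
  rw [show r+2+1 = r+3 by rfl, Finset.sum_range_succ, Finset.sum_range_succ,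
    Finset.sum_range_succ] at this
  have e1 : (r+2).choose (r+1) = r+2 := by
    rw [← Nat.choose_symm (show r+1 ≤ r+2 by omega)]
    simp
  have e2 : (r+2).choose r = (r+2).choose 2 := by
    rw [← Nat.choose_symm (show r ≤ r+2 by omega)]
    congr 1; omega
  rw [e1, e2, Nat.choose_self] at this
  omega

lemma choose2 (r : ℕ) : 2 * (r+2).choose 2 = (r+2) * (r+1) := by
  induction r with
  | zero => rfl
  | succ r ih =>
    have h : (r+3).choose 2 = (r+2).choose 1 + (r+2).choose 2 := Nat.choose_succ_succ (r+2) 1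
    have h1 : (r+2).choose 1 = r+2 := Nat.choose_one_right _
    have : r+1+2 = r+3 := rfl
    rw [this, h, h1]
    ring_nf
    ring_nf at ih
    omega

lemma eps_pow (k r : ℕ) : (2:ℝ)^(k+r) * (2:ℝ)⁻¹^k = 2^r := by
  rw [pow_add, mul_comm ((2:ℝ)^k) _, mul_assoc, ← mul_pow]
  norm_num

lemma two_pow_ge (s : ℕ) : (s:ℝ) + 1 ≤ 2^s := by
  have h : (s+1:ℕ) ≤ 2^s := (Nat.lt_two_pow_self (n := s))
  exact_mod_cast h

lemma W2 (k r : ℕ) (hk : 1 ≤ k) : (r:ℝ) + 1 ≤ (k:ℝ) + 2^r * (2:ℝ)⁻¹^k := by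
  rcases le_or_gt r k with h | h
  · rcases eq_or_lt_of_le h with rfl | h2
    · have h3 : (2:ℝ)^r * (2:ℝ)⁻¹^r = 1 := by
        rw [← mul_pow]; norm_num
      rw [h3]
    · have hpos : (0:ℝ) < 2^r * (2:ℝ)⁻¹^k := by positivity
      have : (r:ℝ) + 1 ≤ (k:ℝ) := by exact_mod_cast h2
      linarith
  · obtain ⟨s, rfl⟩ : ∃ s, r = k + s := ⟨r - k, by omega⟩
    rw [show ((2:ℝ)^(k+s) * (2:ℝ)⁻¹^k) = 2^s from eps_pow k s]
    have := two_pow_ge s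
    push_cast
    linarith

lemma P6 (r : ℕ) (h : 6 ≤ r) : (r^2 + 5*r + 6 : ℕ) ≤ 2^(r+1) := by
  induction r, h using Nat.le_induction with
  | base => norm_num
  | succ n hn ih =>
    have h2 : 2^(n+1+1) = 2 * 2^(n+1) := by ring
    have : (n+1)^2 + 5*(n+1) + 6 ≤ 2*(n^2+5*n+6) := by nlinarith
    omega

lemma W3 (k r : ℕ) (hk : 2 ≤ k) :
    (r:ℝ)^2 + 5*r + 6 ≤ 2*2^r + 2*(k:ℝ)^2 + 2*k + 4*(2^r * (2:ℝ)⁻¹^k) := by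
  have hke : (2:ℝ) ≤ (k:ℝ) := by exact_mod_cast hk
  have heps : (0:ℝ) ≤ 2^r * (2:ℝ)⁻¹^k := by positivity
  rcases le_or_gt r 5 with h | h
  · interval_cases r
    · norm_num; nlinarith
    · norm_num; nlinarith
    · norm_num; nlinarith
    · rcases eq_or_lt_of_le hk with rfl | hk3
      · norm_num
      · have h3 : (3:ℝ) ≤ (k:ℝ) := by exact_mod_cast hk3
        norm_num; nlinarith
    · norm_num; nlinarith
    · norm_num; nlinarith
  · have h6 : 6 ≤ r := by omega
    have hp := P6 r h6
    have h2 : ((r:ℝ)^2 + 5*r + 6) ≤ 2^(r+1) := by exact_mod_cast hp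
    have h3 : (2:ℝ)^(r+1) = 2*2^r := by ring
    nlinarith


-- L4 core
lemma L4 (e : ℝ) (he : 0 < e) (he4 : e ≤ 1/4) (p : ℕ) (hp : 3 ≤ p) :
    (1-2*e)^p ≤ (1-2*e) * (1-e)^p := by
  obtain ⟨s, rfl⟩ : ∃ s, p = s + 3 := ⟨p - 3, by omega⟩
  have h1 : (0:ℝ) ≤ 1 - 2*e := by linarith
  have h2 : (0:ℝ) ≤ 1 - e := by linarith
  have hkey : (1-2*e)^2 ≤ (1-e)^3 := by
    have h0 : (0:ℝ) ≤ e * (1 - e - e*e) := mul_nonneg he.le (by nlinarith)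
    nlinarith
  have hcube : (1-2*e)^3 ≤ (1-2*e) * (1-e)^3 := by
    calc (1-2*e)^3 = (1-2*e) * (1-2*e)^2 := by ring
      _ ≤ (1-2*e) * (1-e)^3 := mul_le_mul_of_nonneg_left hkey h1
  have hs : (1-2*e)^s ≤ (1-e)^s := pow_le_pow_left₀ h1 (by linarith) s
  calc (1-2*e)^(s+3) = (1-2*e)^s * (1-2*e)^3 := by ring
    _ ≤ (1-e)^s * ((1-2*e) * (1-e)^3) := by
        apply mul_le_mul hs hcube (by positivity) (by positivity)
    _ = (1-2*e) * (1-e)^(s+3) := by ring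

-- sumpow : ∑_{j<p} t^j ≤ (t+1)^p  (t ≥ 1), in ℕ
lemma sumpow (t : ℕ) (ht : 1 ≤ t) : ∀ p : ℕ, ∑ j ∈ range p, t^j ≤ (t+1)^p := by
  intro p
  induction p with
  | zero => simp
  | succ p ih =>
    rw [Finset.sum_range_succ, pow_succ]
    have h1 : t^p ≤ (t+1)^p := Nat.pow_le_pow_left (by omega) p
    have h2 : 1 ≤ (t+1)^p := Nat.one_le_pow _ _ (by omega)
    nlinarith

-- Pascal for SS
lemma SS_succ (n t : ℕ) : SS (n+1) (t+1) = SS n (t+1) + SS n t := by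
  unfold SS
  rw [Finset.sum_range_succ' (fun i => (n+1).choose i) (t+1)]
  have h : ∀ i, (n+1).choose (i+1) = n.choose i + n.choose (i+1) :=
    fun i => Nat.choose_succ_succ n i
  simp only [h]
  rw [Finset.sum_add_distrib]
  have h2 : ∑ i ∈ range (t+1), n.choose (i+1) + (n+1).choose 0
      = ∑ i ∈ range (t+1+1), n.choose i := by
    rw [Finset.sum_range_succ' (fun i => n.choose i) (t+1)]
    simp
  omega

-- base n = k
lemma SS_self (k : ℕ) : SS k k = 2^k := Nat.sum_range_choose k

lemma base_nk (k p : ℕ) (hk : 1 ≤ k) :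
    (SS k k : ℝ) ≤ (∑ j ∈ range p, (k:ℝ)^j) + 2^k * (1 - (2:ℝ)⁻¹^k)^p := by
  rw [SS_self]
  have he1 : (2:ℝ)^k * (2:ℝ)⁻¹^k = 1 := by rw [← mul_pow]; norm_num
  have hb : 1 - (p:ℝ) * (2:ℝ)⁻¹^k ≤ (1 - (2:ℝ)⁻¹^k)^p := by
    have := one_add_mul_le_pow (a := -(2:ℝ)⁻¹^k) (by
      have h9 : (2:ℝ)⁻¹^k ≤ 1 := pow_le_one₀ (by norm_num) (by norm_num)
      linarith) p
    calc 1 - (p:ℝ) * (2:ℝ)⁻¹^k = 1 + p * (-(2:ℝ)⁻¹^k) := by ring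
      _ ≤ (1 + -(2:ℝ)⁻¹^k)^p := this
      _ = (1 - (2:ℝ)⁻¹^k)^p := by ring_nf
  have hA : (p:ℝ) ≤ ∑ j ∈ range p, (k:ℝ)^j := by
    have : ∀ j ∈ range p, (1:ℝ) ≤ (k:ℝ)^j := by
      intro j _
      apply one_le_pow₀
      exact_mod_cast hk
    calc (p:ℝ) = ∑ _j ∈ range p, (1:ℝ) := by simp
      _ ≤ _ := Finset.sum_le_sum this
  have h2 : (2:ℝ)^k * (1 - (p:ℝ) * (2:ℝ)⁻¹^k) ≤ 2^k * (1 - (2:ℝ)⁻¹^k)^p := by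
    apply mul_le_mul_of_nonneg_left hb (by positivity)
  have h3 : (2:ℝ)^k * (1 - (p:ℝ) * (2:ℝ)⁻¹^k) = 2^k - p := by
    rw [mul_sub]
    rw [show (2:ℝ)^k * ((p:ℝ) * (2:ℝ)⁻¹^k) = (p:ℝ) * ((2:ℝ)^k * (2:ℝ)⁻¹^k) by ring, he1]
    ring
  push_cast
  linarith

-- k = 1 level
lemma level_k1 (p n : ℕ) (hn : 1 ≤ n) :
    (SS n 1 : ℝ) ≤ (∑ j ∈ range p, (1:ℝ)^j) + 2^n * (1 - (2:ℝ)⁻¹^1)^p := by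
  have hSS : SS n 1 = n + 1 := by
    unfold SS
    rw [Finset.sum_range_succ, Finset.sum_range_succ]
    simp [Nat.choose_one_right]
    omega
  rw [hSS]
  have hq : (1 - (2:ℝ)⁻¹^1) = 2⁻¹ := by norm_num
  rw [hq]
  have hA : (∑ j ∈ range p, (1:ℝ)^j) = p := by simp
  rw [hA]
  rcases le_or_gt p n with h | h
  · obtain ⟨s, rfl⟩ : ∃ s, n = p + s := ⟨n - p, by omega⟩
    have he : (2:ℝ)^(p+s) * (2:ℝ)⁻¹^p = 2^s := by
      rw [pow_add, mul_comm ((2:ℝ)^p) _, mul_assoc, ← mul_pow]; norm_num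
    rw [show ((2:ℝ)⁻¹)^p = (2:ℝ)⁻¹^p from rfl, he]
    have h2 : (s:ℝ) + 1 ≤ 2^s := by
      have := Nat.lt_two_pow_self (n := s)
      have : (s+1:ℕ) ≤ 2^s := this
      exact_mod_cast this
    push_cast
    linarith
  · have hp : (n:ℝ) + 1 ≤ (p:ℝ) := by exact_mod_cast h
    have : (0:ℝ) < 2^n * (2:ℝ)⁻¹^p := by positivity
    push_cast
    linarith


-- placeholders for already-proven lemmas
-- common setup
lemma SS_real (k r : ℕ) :
    (SS (k+r) k : ℝ) = 2^(k+r) - (∑ i ∈ Ico (k+1) (k+r+1), (k+r).choose i : ℕ) := by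
  have h := sum_split k r
  have h2 : (SS (k+r) k : ℝ) + ((∑ i ∈ Ico (k+1) (k+r+1), (k+r).choose i : ℕ) : ℝ)
      = 2^(k+r) := by exact_mod_cast h
  linarith

lemma level1 (k r : ℕ) (hk : 1 ≤ k) :
    (SS (k+r) k : ℝ) ≤ (∑ j ∈ range 1, (k:ℝ)^j) + 2^(k+r) * (1 - (2:ℝ)⁻¹^k)^1 := by
  rw [SS_real]
  have hE := eps_pow k r
  have hD : (2^r : ℕ) ≤ (∑ i ∈ Ico (k+1) (k+r+1), (k+r).choose i : ℕ) + 1 := by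
    have hdl := D_lower k r 0 (by omega)
    simp only [Nat.add_zero] at hdl
    have h0 := T0 r
    omega
  have hDr : (2:ℝ)^r ≤ (∑ i ∈ Ico (k+1) (k+r+1), (k+r).choose i : ℕ) + 1 := by
    exact_mod_cast hD
  have hexp : (2:ℝ)^(k+r) * (1 - (2:ℝ)⁻¹^k)^1
      = 2^(k+r) - 2^r := by
    rw [pow_one, mul_sub, hE, mul_one]
  rw [hexp]
  simp only [Finset.sum_range_one, pow_zero]
  linarith

lemma level2 (k r : ℕ) (hk : 1 ≤ k) :
    (SS (k+r) k : ℝ) ≤ (∑ j ∈ range 2, (k:ℝ)^j) + 2^(k+r) * (1 - (2:ℝ)⁻¹^k)^2 := by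
  rw [SS_real]
  have hE := eps_pow k r
  have hD : (2^(r+1) : ℕ) ≤ (∑ i ∈ Ico (k+1) (k+r+1), (k+r).choose i : ℕ) + (r+2) := by
    have := D_lower k r 1 (by omega)
    have h0 := T1 r
    omega
  have hDr : (2:ℝ)*2^r ≤ (∑ i ∈ Ico (k+1) (k+r+1), (k+r).choose i : ℕ) + (r+2) := by
    have : ((2^(r+1):ℕ):ℝ) ≤ ((∑ i ∈ Ico (k+1) (k+r+1), (k+r).choose i : ℕ) : ℝ) + ((r:ℝ)+2) := by
      exact_mod_cast hD
    calc (2:ℝ)*2^r = ((2^(r+1):ℕ):ℝ) := by push_cast; ring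
      _ ≤ _ := this
  have hw2 := W2 k r hk
  have hexp : (2:ℝ)^(k+r) * (1 - (2:ℝ)⁻¹^k)^2
      = 2^(k+r) - 2*2^r + 2^r * (2:ℝ)⁻¹^k := by
    have : (2:ℝ)^(k+r) * (1 - (2:ℝ)⁻¹^k)^2
        = 2^(k+r) - 2*(2^(k+r) * (2:ℝ)⁻¹^k) + (2^(k+r) * (2:ℝ)⁻¹^k) * (2:ℝ)⁻¹^k := by
      ring
    rw [this, hE]
  rw [hexp]
  have hsum : (∑ j ∈ range 2, (k:ℝ)^j) = 1 + k := by
    rw [Finset.sum_range_succ, Finset.sum_range_one]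
    norm_num
  rw [hsum]
  linarith

lemma level3 (k r : ℕ) (hk : 2 ≤ k) :
    (SS (k+r) k : ℝ) ≤ (∑ j ∈ range 3, (k:ℝ)^j) + 2^(k+r) * (1 - (2:ℝ)⁻¹^k)^3 := by
  rw [SS_real]
  have hE := eps_pow k r
  have hD : (2^(r+2) : ℕ) ≤ (∑ i ∈ Ico (k+1) (k+r+1), (k+r).choose i : ℕ)
      + ((r+2).choose 2 + (r+3)) := by
    have := D_lower k r 2 hk
    have h0 := T2 r
    omega
  have hDr : (4:ℝ)*2^r ≤ (∑ i ∈ Ico (k+1) (k+r+1), (k+r).choose i : ℕ)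
      + (((r+2).choose 2 : ℕ) : ℝ) + ((r:ℝ)+3) := by
    have h1 : ((2^(r+2):ℕ):ℝ) ≤ ((∑ i ∈ Ico (k+1) (k+r+1), (k+r).choose i : ℕ) : ℝ)
        + ((((r+2).choose 2 : ℕ):ℝ) + ((r:ℝ)+3)) := by exact_mod_cast hD
    push_cast at h1 ⊢
    have h4 : (2:ℝ)^(r+2) = 4*2^r := by ring
    linarith
  have hC2 : 2 * (((r+2).choose 2 : ℕ) : ℝ) = ((r:ℝ)+2) * ((r:ℝ)+1) := by
    exact_mod_cast choose2 r
  have hw3 := W3 k r hk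
  have hE1 : (2:ℝ)⁻¹^k ≤ 1 := pow_le_one₀ (by norm_num) (by norm_num)
  have hE0 : (0:ℝ) ≤ (2:ℝ)⁻¹^k := by positivity
  have hY0 : (0:ℝ) ≤ 2^r * (2:ℝ)⁻¹^k := by positivity
  have hYE : (2^r * (2:ℝ)⁻¹^k) * (2:ℝ)⁻¹^k ≤ 2^r * (2:ℝ)⁻¹^k := by
    nlinarith
  have hexp : (2:ℝ)^(k+r) * (1 - (2:ℝ)⁻¹^k)^3
      = 2^(k+r) - 3*2^r + 3*(2^r * (2:ℝ)⁻¹^k) - (2^r * (2:ℝ)⁻¹^k) * (2:ℝ)⁻¹^k := by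
    have : (2:ℝ)^(k+r) * (1 - (2:ℝ)⁻¹^k)^3
        = 2^(k+r) - 3*(2^(k+r) * (2:ℝ)⁻¹^k)
          + 3*((2^(k+r) * (2:ℝ)⁻¹^k) * (2:ℝ)⁻¹^k)
          - ((2^(k+r) * (2:ℝ)⁻¹^k) * (2:ℝ)⁻¹^k) * (2:ℝ)⁻¹^k := by
      ring
    rw [this, hE]
  rw [hexp]
  have hsum : (∑ j ∈ range 3, (k:ℝ)^j) = 1 + k + (k:ℝ)^2 := by
    rw [Finset.sum_range_succ, Finset.sum_range_succ, Finset.sum_range_one]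
    norm_num
  rw [hsum]
  nlinarith [hDr, hC2, hw3, hYE]


theorem key (p : ℕ) : ∀ n k : ℕ, 1 ≤ k → k ≤ n →
    (SS n k : ℝ) ≤ (∑ j ∈ range p, (k:ℝ)^j) + 2^n * (1 - (2:ℝ)⁻¹^k)^p := by
  induction p with
  | zero =>
    intro n k hk hkn
    simp only [range_zero, sum_empty, pow_zero, mul_one, zero_add]
    have h : SS n k ≤ 2^n := by
      unfold SS
      calc ∑ i ∈ range (k+1), n.choose i
          ≤ ∑ i ∈ range (n+1), n.choose i :=
            Finset.sum_le_sum_of_subset (Finset.range_subset_range.2 (by omega))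
        _ = 2^n := Nat.sum_range_choose n
    exact_mod_cast h
  | succ p ih =>
    intro n k hk hkn
    rcases eq_or_lt_of_le hk with h1 | hk2
    · subst h1
      exact_mod_cast level_k1 (p+1) n (by omega)
    · have hk2' : 2 ≤ k := hk2
      obtain ⟨r, rfl⟩ : ∃ r, n = k + r := ⟨n - k, by omega⟩
      rcases p with _ | _ | _ | s
      · exact level1 k r (by omega)
      · exact level2 k r (by omega)
      · exact level3 k r hk2'
      · -- step : proving level s+4
        rcases r with _ | r'
        · simpa using base_nk k (s+4) (by omega)
        · obtain ⟨t, rfl⟩ : ∃ t, k = t + 1 := ⟨k - 1, by omega⟩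
          have ht : 1 ≤ t := by omega
          have hn : t+1+(r'+1) = (t+1+r')+1 := by omega
          rw [hn, SS_succ (t+1+r') t]
          have h1 := ih (t+1+r') (t+1) (by omega) (by omega)
          have h2 := ih (t+1+r') t (by omega) (by omega)
          set E : ℝ := (2:ℝ)⁻¹^(t+1) with hEdef
          have hEpos : (0:ℝ) < E := by positivity
          have hE4 : E ≤ 1/4 := by
            rw [hEdef, show (1/4 : ℝ) = (2:ℝ)⁻¹^2 by norm_num]
            exact pow_le_pow_of_le_one (by norm_num) (by norm_num) (by omega)
          have h2E : (2:ℝ)⁻¹^t = 2*E := by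
            rw [hEdef, pow_succ]; ring
          rw [h2E] at h2
          have hL4 : (1-2*E)^(s+3) ≤ (1-2*E) * (1-E)^(s+3) :=
            L4 E hEpos hE4 (s+3) (by omega)
          have hB : (2:ℝ)^(t+1+r') * (1-2*E)^(s+3)
              ≤ 2^(t+1+r') * ((1-2*E) * (1-E)^(s+3)) :=
            mul_le_mul_of_nonneg_left hL4 (by positivity)
          have hsp : (∑ j ∈ range (s+3), ((t:ℕ):ℝ)^j) ≤ (((t+1:ℕ)):ℝ)^(s+3) := by
            exact_mod_cast sumpow t ht (s+3)
          have hA2 : (∑ j ∈ range (s+4), (((t+1:ℕ)):ℝ)^j)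
              = (∑ j ∈ range (s+3), (((t+1:ℕ)):ℝ)^j) + (((t+1:ℕ)):ℝ)^(s+3) :=
            Finset.sum_range_succ _ _
          have hpow : (2:ℝ)^((t+1+r')+1) * (1-E)^(s+4)
              = 2^(t+1+r') * ((1-E)^(s+3) * (2 - 2*E)) := by
            ring
          rw [Nat.cast_add (SS (t+1+r') (t+1)) (SS (t+1+r') t)]
          calc (SS (t+1+r') (t+1) : ℝ) + (SS (t+1+r') t : ℝ)
              ≤ ((∑ j ∈ range (s+3), (((t+1:ℕ)):ℝ)^j) + 2^(t+1+r') * (1-E)^(s+3))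
                + ((∑ j ∈ range (s+3), ((t:ℕ):ℝ)^j) + 2^(t+1+r') * (1-2*E)^(s+3)) :=
                add_le_add h1 h2
            _ ≤ ((∑ j ∈ range (s+3), (((t+1:ℕ)):ℝ)^j) + 2^(t+1+r') * (1-E)^(s+3))
                + ((((t+1:ℕ)):ℝ)^(s+3) + 2^(t+1+r') * ((1-2*E) * (1-E)^(s+3))) := by
                have := add_le_add hsp hB
                linarith
            _ = ((∑ j ∈ range (s+3), (((t+1:ℕ)):ℝ)^j) + (((t+1:ℕ)):ℝ)^(s+3))
                + 2^(t+1+r') * ((1-E)^(s+3) * (2 - 2*E)) := by ring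
            _ = (∑ j ∈ range (s+4), (((t+1:ℕ)):ℝ)^j) + 2^((t+1+r')+1) * (1-E)^(s+4) := by
                rw [hA2, hpow]


end BT

/-- For all 2 ≤ k ≤ n, ∑_{i=0}^{k} C(n,i) ≤ (k^p̂ − 1)/(k − 1) + 2^n (1 − 2^{−k})^p̂,
where p̂ = ⌊(n − k)/log₂(k/(1 − 2^{−k}))⌋ + 1. -/
theorem binomial_sum_le_Theta_phat (k n : ℕ) (hk : 2 ≤ k) (hkn : k ≤ n) :
    ((∑ i ∈ Finset.range (k + 1), n.choose i : ℕ) : ℝ) ≤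
      ((k : ℝ) ^ (⌊((n : ℝ) - k) / Real.logb 2 ((k : ℝ) / (1 - (2 : ℝ)⁻¹ ^ k))⌋₊ + 1) - 1)
          / ((k : ℝ) - 1)
        + 2 ^ n * (1 - (2 : ℝ)⁻¹ ^ k)
            ^ (⌊((n : ℝ) - k) / Real.logb 2 ((k : ℝ) / (1 - (2 : ℝ)⁻¹ ^ k))⌋₊ + 1) := by
  have hkey := BT.key (⌊((n : ℝ) - k) / Real.logb 2 ((k : ℝ) / (1 - (2 : ℝ)⁻¹ ^ k))⌋₊ + 1)
    n k (by omega) hkn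
  have hk1 : (k:ℝ) ≠ 1 := by
    have : (2:ℝ) ≤ (k:ℝ) := by exact_mod_cast hk
    linarith
  rw [geom_sum_eq hk1] at hkey
  unfold BT.SS at hkey
  exact hkey
end

section
/- Let Θ(k, n, p) = (k^p − 1)/(k − 1) + 2^n (1 − 2^{−k})^p for integers k ≥ 2, n ≥ k, p ≥ 0. Then Θ(k, n, p+1) ≤ Θ(k, n, p) if and only if p ≤ (n − k)/log₂(k/(1 − 2^{−k})). Consequently, p̂ = ⌊(n−k)/log₂(k/(1−2^{−k}))⌋ + 1 minimizes Θ(k, n, p) over nonnegative integers p. -/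
/-- Θ(k,n,p) = (k^p − 1)/(k − 1) + 2^n (1 − 2^{−k})^p. -/
noncomputable def Theta (k n p : ℕ) : ℝ :=
  ((k : ℝ) ^ p - 1) / ((k : ℝ) - 1) + 2 ^ n * (1 - (2 : ℝ)⁻¹ ^ k) ^ p

private lemma aux_down (f : ℕ → ℝ) :
    ∀ N, (∀ m, m < N → f (m + 1) ≤ f m) → ∀ q, q ≤ N → f N ≤ f q := by
  intro N
  induction N with
  | zero => intro _ q hq; interval_cases q; exact le_refl _
  | succ N ih =>
    intro h q hq
    rcases Nat.lt_succ_iff_lt_or_eq.mp (Nat.lt_succ_of_le hq) with h' | h'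
    · exact le_trans (h N (Nat.lt_succ_self N))
        (ih (fun m hm => h m (hm.trans (Nat.lt_succ_self N))) q (Nat.lt_succ_iff.mp h'))
    · rw [h']

private lemma aux_up (f : ℕ → ℝ) (N : ℕ) (h : ∀ m, N ≤ m → f m ≤ f (m + 1)) :
    ∀ q, N ≤ q → f N ≤ f q := by
  intro q hq
  induction q, hq using Nat.le_induction with
  | base => exact le_refl _
  | succ m hm ih => exact le_trans ih (h m hm)

/-- Θ(k,n,p+1) ≤ Θ(k,n,p) iff p ≤ (n−k)/log₂(k/(1−2^{−k})); consequently
p̂ = ⌊(n−k)/log₂(k/(1−2^{−k}))⌋ + 1 minimizes Θ(k,n,·) over ℕ. -/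
theorem Theta_decreasing_iff_and_min (k n : ℕ) (hk : 2 ≤ k) (hkn : k ≤ n) :
    (∀ p : ℕ, Theta k n (p + 1) ≤ Theta k n p ↔
      (p : ℝ) ≤ ((n : ℝ) - k) / Real.logb 2 ((k : ℝ) / (1 - (2 : ℝ)⁻¹ ^ k))) ∧
    (∀ q : ℕ, Theta k n
        (⌊((n : ℝ) - k) / Real.logb 2 ((k : ℝ) / (1 - (2 : ℝ)⁻¹ ^ k))⌋₊ + 1)
      ≤ Theta k n q) := by
  set q : ℝ := 1 - (2 : ℝ)⁻¹ ^ k with hq_def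
  have hk1 : (1 : ℝ) < k := by exact_mod_cast lt_of_lt_of_le one_lt_two hk
  have hik : (2 : ℝ)⁻¹ ^ k < 1 := by
    apply pow_lt_one₀ (by norm_num) (by norm_num)
    omega
  have hik0 : (0 : ℝ) < (2 : ℝ)⁻¹ ^ k := by positivity
  have hq0 : 0 < q := by rw [hq_def]; linarith
  have hq1 : q < 1 := by rw [hq_def]; linarith
  have hkq : 1 < (k : ℝ) / q := by
    rw [lt_div_iff₀ hq0]; linarith
  have hL : 0 < Real.logb 2 ((k : ℝ) / q) := Real.logb_pos one_lt_two hkq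
  set L : ℝ := Real.logb 2 ((k : ℝ) / q) with hL_def
  -- the main iff
  have main : ∀ p : ℕ, Theta k n (p + 1) ≤ Theta k n p ↔
      (p : ℝ) ≤ ((n : ℝ) - k) / L := by
    intro p
    have hc : (k : ℝ) - 1 ≠ 0 := by linarith
    have hdiff : Theta k n (p + 1) =
        Theta k n p + ((k : ℝ) ^ p - 2 ^ n * (2 : ℝ)⁻¹ ^ k * q ^ p) := by
      unfold Theta
      rw [← hq_def]
      have h1 : ((k : ℝ) ^ (p + 1) - 1) / ((k : ℝ) - 1)
          = ((k : ℝ) ^ p - 1) / ((k : ℝ) - 1) + (k : ℝ) ^ p := by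
        field_simp
        ring
      rw [h1, pow_succ, hq_def]
      ring
    have step1 : Theta k n (p + 1) ≤ Theta k n p ↔
        (k : ℝ) ^ p ≤ 2 ^ n * (2 : ℝ)⁻¹ ^ k * q ^ p := by
      rw [hdiff]; constructor <;> intro h <;> linarith
    have hqp : (0 : ℝ) < q ^ p := by positivity
    have step2 : (k : ℝ) ^ p ≤ 2 ^ n * (2 : ℝ)⁻¹ ^ k * q ^ p ↔
        ((k : ℝ) / q) ^ p ≤ 2 ^ n * (2 : ℝ)⁻¹ ^ k := by
      rw [div_pow, div_le_iff₀ hqp]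
    have hpos1 : (0 : ℝ) < ((k : ℝ) / q) ^ p := by positivity
    have hpos2 : (0 : ℝ) < (2 : ℝ) ^ n * (2 : ℝ)⁻¹ ^ k := by positivity
    have step3 : ((k : ℝ) / q) ^ p ≤ 2 ^ n * (2 : ℝ)⁻¹ ^ k ↔
        (p : ℝ) * L ≤ (n : ℝ) - k := by
      rw [← Real.logb_le_logb one_lt_two hpos1 hpos2, Real.logb_pow,
        Real.logb_mul (by positivity) (by positivity), Real.logb_pow, Real.logb_pow,
        Real.logb_inv, Real.logb_self_eq_one (by norm_num)]
      constructor <;> intro h <;> [linarith; linarith]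
    rw [step1, step2, step3, le_div_iff₀ hL]
  constructor
  · exact main
  · intro m
    set Lq : ℝ := ((n : ℝ) - k) / L with hLq_def
    have hLq0 : 0 ≤ Lq := by
      apply div_nonneg _ hL.le
      have : (k : ℝ) ≤ n := by exact_mod_cast hkn
      linarith
    set P : ℕ := ⌊Lq⌋₊ + 1 with hP_def
    rcases le_or_gt m P with hm | hm
    · -- decreasing up to P
      apply aux_down (Theta k n) P _ m hm
      intro p hp
      rw [main p]
      exact (Nat.le_floor_iff hLq0).mp (Nat.lt_succ_iff.mp hp)
    · -- increasing after P
      apply aux_up (Theta k n) P _ m hm.le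
      intro p hp
      have : ¬ ((p : ℝ) ≤ Lq) := by
        intro hle
        have := Nat.le_floor hle
        omega
      have := (main p).not.mpr this
      linarith [not_le.mp this]
end
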